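/- arXiv:0907.3312 — 7 statements merged into one kernel-verified Lean document; each statement's English description precedes it below -/
import Mathlib

section
/- For all n×n matrices A and B with non-negative real entries, the spectral radius of their Hadamard product is at most the square root of the spectral radius of (A∘A)(B∘B), which in turn is at most the spectral radius of the ordinary matrix product AB: ρ(A∘B) ≤ ρ((A∘A)(B∘B))^{1/2} ≤ ρ(AB). -/
open Matrix Filter


/-- The spectral radius of a real square matrix: the largest modulus of its
complex eigenvalues, i.e. the supremum of the moduli of the elements of the
spectrum of the matrix viewed as a complex matrix. -/
noncomputable def specRad {n : ℕ} (A : Matrix (Fin n) (Fin n) ℝ) : ℝ :=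
  sSup {r : ℝ | ∃ μ ∈ spectrum ℂ (A.map (fun a => (a : ℂ))), ‖μ‖ = r}

open Topology

attribute [local instance] Matrix.linftyOpSemiNormedRing Matrix.linftyOpNormedRing
  Matrix.linftyOpNormedAlgebra

namespace SpecRadAux

variable {n : ℕ}

/-- complexification -/
noncomputable def cm (M : Matrix (Fin n) (Fin n) ℝ) : Matrix (Fin n) (Fin n) ℂ :=
  M.map (fun a => (a : ℂ))

lemma cm_pow (M : Matrix (Fin n) (Fin n) ℝ) (k : ℕ) : cm (M ^ k) = cm M ^ k := by
  induction k with
  | zero => ext i j; simp [cm, Matrix.one_apply]; split <;> simp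
  | succ m ih =>
      rw [pow_succ, pow_succ, ← ih]
      show (M ^ m * M).map (Complex.ofRealHom : ℝ →+* ℂ) =
        ((M ^ m).map (Complex.ofRealHom : ℝ →+* ℂ)) * M.map (Complex.ofRealHom : ℝ →+* ℂ)
      exact Matrix.map_mul

lemma norm_cm (M : Matrix (Fin n) (Fin n) ℝ) : ‖cm M‖ = ‖M‖ := by
  rw [Matrix.linfty_opNorm_def, Matrix.linfty_opNorm_def]
  congr 1
  apply Finset.sup_congr rfl
  intro i _
  congr 1
  ext j
  simp [cm, Complex.nnnorm_real]

instance : CompleteSpace (Matrix (Fin n) (Fin n) ℂ) := FiniteDimensional.complete ℂ _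

lemma row_sum_le_norm (X : Matrix (Fin n) (Fin n) ℝ) (i : Fin n) :
    ∑ j, |X i j| ≤ ‖X‖ := by
  rw [Matrix.linfty_opNorm_def]
  have h := Finset.le_sup (f := fun i : Fin n => ∑ j : Fin n, ‖X i j‖₊)
    (Finset.mem_univ i)
  have h2 : ((∑ j : Fin n, ‖X i j‖₊ : NNReal) : ℝ) = ∑ j, |X i j| := by
    push_cast
    simp [Real.norm_eq_abs]
  rw [← h2]
  exact_mod_cast h

lemma norm_le_of (X : Matrix (Fin n) (Fin n) ℝ) {c : ℝ} (hc : 0 ≤ c)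
    (h : ∀ i, ∑ j, |X i j| ≤ c) : ‖X‖ ≤ c := by
  rw [Matrix.linfty_opNorm_def]
  have : (Finset.univ.sup fun i : Fin n => ∑ j : Fin n, ‖X i j‖₊) ≤ c.toNNReal := by
    apply Finset.sup_le
    intro i _
    rw [← NNReal.coe_le_coe, Real.coe_toNNReal _ hc]
    calc ((∑ j : Fin n, ‖X i j‖₊ : NNReal) : ℝ) = ∑ j, |X i j| := by
          push_cast; simp [Real.norm_eq_abs]
      _ ≤ c := h i
  calc ((Finset.univ.sup fun i : Fin n => ∑ j : Fin n, ‖X i j‖₊ : NNReal) : ℝ)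
      ≤ (c.toNNReal : ℝ) := by exact_mod_cast this
    _ = c := Real.coe_toNNReal _ hc

lemma mul_entry_nonneg {X Y : Matrix (Fin n) (Fin n) ℝ}
    (hX : ∀ i j, 0 ≤ X i j) (hY : ∀ i j, 0 ≤ Y i j) : ∀ i j, 0 ≤ (X * Y) i j := by
  intro i j
  rw [Matrix.mul_apply]
  exact Finset.sum_nonneg fun t _ => mul_nonneg (hX i t) (hY t j)

lemma pow_entry_nonneg {X : Matrix (Fin n) (Fin n) ℝ}
    (hX : ∀ i j, 0 ≤ X i j) : ∀ k, ∀ i j, 0 ≤ (X ^ k) i j := by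
  intro k
  induction k with
  | zero => intro i j; simp [Matrix.one_apply]; split <;> norm_num
  | succ m ih =>
      rw [pow_succ]
      exact mul_entry_nonneg ih hX

/-- Cauchy–Schwarz style bound for sums. -/
lemma sum_sq_le {f u v : Fin n → ℝ} (hf : ∀ t, 0 ≤ f t) (hu : ∀ t, 0 ≤ u t)
    (hv : ∀ t, 0 ≤ v t) (h : ∀ t, f t ^ 2 ≤ u t * v t) :
    (∑ t, f t) ^ 2 ≤ (∑ t, u t) * ∑ t, v t := by
  have h1 : ∑ t, f t ≤ ∑ t, Real.sqrt (u t) * Real.sqrt (v t) := by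
    apply Finset.sum_le_sum
    intro t _
    rw [← Real.sqrt_mul (hu t)]
    calc f t = Real.sqrt (f t ^ 2) := (Real.sqrt_sq (hf t)).symm
      _ ≤ Real.sqrt (u t * v t) := Real.sqrt_le_sqrt (h t)
  have h2 : ∑ t, Real.sqrt (u t) * Real.sqrt (v t)
      ≤ Real.sqrt (∑ t, u t) * Real.sqrt (∑ t, v t) :=
    Real.sum_sqrt_mul_sqrt_le _ hu hv
  calc (∑ t, f t) ^ 2 ≤ (Real.sqrt (∑ t, u t) * Real.sqrt (∑ t, v t)) ^ 2 := by
        apply pow_le_pow_left₀ (Finset.sum_nonneg fun t _ => hf t) (h1.trans h2)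
    _ = (∑ t, u t) * ∑ t, v t := by
        rw [mul_pow, Real.sq_sqrt (Finset.sum_nonneg fun t _ => hu t),
          Real.sq_sqrt (Finset.sum_nonneg fun t _ => hv t)]

/-- Matrix-product Cauchy–Schwarz. -/
lemma mul_sq_le {X Y Z W Z' W' : Matrix (Fin n) (Fin n) ℝ}
    (hX : ∀ i j, 0 ≤ X i j) (hY : ∀ i j, 0 ≤ Y i j)
    (hZ : ∀ i j, 0 ≤ Z i j) (hW : ∀ i j, 0 ≤ W i j)
    (hZ' : ∀ i j, 0 ≤ Z' i j) (hW' : ∀ i j, 0 ≤ W' i j)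
    (h1 : ∀ i j, X i j ^ 2 ≤ Z i j * W i j) (h2 : ∀ i j, Y i j ^ 2 ≤ Z' i j * W' i j) :
    ∀ i j, ((X * Y) i j) ^ 2 ≤ (Z * Z') i j * (W * W') i j := by
  intro i j
  simp only [Matrix.mul_apply]
  apply sum_sq_le (fun t => mul_nonneg (hX i t) (hY t j))
    (fun t => mul_nonneg (hZ i t) (hZ' t j)) (fun t => mul_nonneg (hW i t) (hW' t j))
  intro t
  calc (X i t * Y t j) ^ 2 = X i t ^ 2 * Y t j ^ 2 := by ring
    _ ≤ (Z i t * W i t) * (Z' t j * W' t j) :=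
        mul_le_mul (h1 i t) (h2 t j) (sq_nonneg _) (mul_nonneg (hZ i t) (hW i t))
    _ = (Z i t * Z' t j) * (W i t * W' t j) := by ring

lemma pow_sq_le {P C D : Matrix (Fin n) (Fin n) ℝ}
    (hP : ∀ i j, 0 ≤ P i j) (hC : ∀ i j, 0 ≤ C i j) (hD : ∀ i j, 0 ≤ D i j)
    (h : ∀ i j, P i j ^ 2 ≤ C i j * D i j) :
    ∀ k, ∀ i j, ((P ^ k) i j) ^ 2 ≤ (C ^ k) i j * (D ^ k) i j := by
  intro k
  induction k with
  | zero =>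
      intro i j
      simp only [pow_zero, Matrix.one_apply]
      split <;> norm_num
  | succ m ih =>
      rw [pow_succ, pow_succ, pow_succ]
      exact mul_sq_le (pow_entry_nonneg hP m) hP (pow_entry_nonneg hC m)
        (pow_entry_nonneg hD m) hC hD ih h

lemma pow_le_sq {X M : Matrix (Fin n) (Fin n) ℝ}
    (hX : ∀ i j, 0 ≤ X i j) (hM : ∀ i j, 0 ≤ M i j)
    (h : ∀ i j, X i j ≤ M i j ^ 2) :
    ∀ k, ∀ i j, (X ^ k) i j ≤ ((M ^ k) i j) ^ 2 := by
  intro k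
  induction k with
  | zero =>
      intro i j
      simp only [pow_zero, Matrix.one_apply]
      split <;> norm_num
  | succ m ih =>
      intro i j
      rw [pow_succ, pow_succ]
      simp only [Matrix.mul_apply]
      calc ∑ t, (X ^ m) i t * X t j
          ≤ ∑ t, ((M ^ m) i t * M t j) ^ 2 := by
            apply Finset.sum_le_sum
            intro t _
            calc (X ^ m) i t * X t j ≤ ((M ^ m) i t) ^ 2 * (M t j) ^ 2 :=
                  mul_le_mul (ih i t) (h t j) (hX t j) (sq_nonneg _)
              _ = ((M ^ m) i t * M t j) ^ 2 := by ring
        _ ≤ (∑ t, (M ^ m) i t * M t j) ^ 2 :=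
            Finset.sum_sq_le_sq_sum_of_nonneg fun t _ =>
              mul_nonneg (pow_entry_nonneg hM m i t) (hM t j)

lemma norm_le_sqrt {X Y W : Matrix (Fin n) (Fin n) ℝ}
    (hX : ∀ i j, 0 ≤ X i j) (hY : ∀ i j, 0 ≤ Y i j) (hW : ∀ i j, 0 ≤ W i j)
    (h : ∀ i j, X i j ^ 2 ≤ Y i j * W i j) :
    ‖X‖ ≤ Real.sqrt (‖Y‖ * ‖W‖) := by
  apply norm_le_of _ (Real.sqrt_nonneg _)
  intro i
  have habs : ∀ j, |X i j| = X i j := fun j => abs_of_nonneg (hX i j)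
  simp only [habs]
  have hsq : (∑ j, X i j) ^ 2 ≤ ‖Y‖ * ‖W‖ := by
    calc (∑ j, X i j) ^ 2 ≤ (∑ j, Y i j) * ∑ j, W i j :=
          sum_sq_le (hX i) (hY i) (hW i) (h i)
      _ ≤ ‖Y‖ * ‖W‖ := by
          apply mul_le_mul
          · calc ∑ j, Y i j = ∑ j, |Y i j| := by
                  simp only [fun j => abs_of_nonneg (hY i j)]
              _ ≤ ‖Y‖ := row_sum_le_norm Y i
          · calc ∑ j, W i j = ∑ j, |W i j| := by
                  simp only [fun j => abs_of_nonneg (hW i j)]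
              _ ≤ ‖W‖ := row_sum_le_norm W i
          · exact Finset.sum_nonneg fun j _ => hW i j
          · exact norm_nonneg _
  calc ∑ j, X i j = Real.sqrt ((∑ j, X i j) ^ 2) :=
        (Real.sqrt_sq (Finset.sum_nonneg fun j _ => hX i j)).symm
    _ ≤ Real.sqrt (‖Y‖ * ‖W‖) := Real.sqrt_le_sqrt hsq

lemma norm_le_sq {X M : Matrix (Fin n) (Fin n) ℝ}
    (hX : ∀ i j, 0 ≤ X i j) (hM : ∀ i j, 0 ≤ M i j)
    (h : ∀ i j, X i j ≤ M i j ^ 2) : ‖X‖ ≤ ‖M‖ ^ 2 := by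
  apply norm_le_of _ (sq_nonneg _)
  intro i
  have habs : ∀ j, |X i j| = X i j := fun j => abs_of_nonneg (hX i j)
  simp only [habs]
  calc ∑ j, X i j ≤ ∑ j, M i j ^ 2 := Finset.sum_le_sum fun j _ => h i j
    _ ≤ (∑ j, M i j) ^ 2 := Finset.sum_sq_le_sq_sum_of_nonneg fun j _ => hM i j
    _ ≤ ‖M‖ ^ 2 := by
        apply pow_le_pow_left₀ (Finset.sum_nonneg fun j _ => hM i j)
        calc ∑ j, M i j = ∑ j, |M i j| := by
              simp only [fun j => abs_of_nonneg (hM i j)]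
          _ ≤ ‖M‖ := row_sum_le_norm M i

lemma pow_succ_sandwich (X Y : Matrix (Fin n) (Fin n) ℝ) (k : ℕ) :
    (Y * X) ^ (k + 1) = Y * (X * Y) ^ k * X := by
  induction k with
  | zero => simp
  | succ m ih =>
      calc (Y * X) ^ (m + 2) = (Y * X) * (Y * X) ^ (m + 1) := by rw [pow_succ']
        _ = (Y * X) * (Y * (X * Y) ^ m * X) := by rw [ih]
        _ = Y * ((X * Y) * (X * Y) ^ m) * X := by noncomm_ring
        _ = Y * (X * Y) ^ (m + 1) * X := by rw [← pow_succ']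

section Spectral

variable (hn : 0 < n)
include hn

lemma abs_pow_le_norm_pow (M : Matrix (Fin n) (Fin n) ℝ) {μ : ℂ}
    (hμ : μ ∈ spectrum ℂ (cm M)) (k : ℕ) : ‖μ‖ ^ k ≤ ‖M ^ k‖ := by
  haveI : Nonempty (Fin n) := ⟨⟨0, hn⟩⟩
  have pm : μ ^ k ∈ spectrum ℂ (cm M ^ k) := by
    have := spectrum.subset_polynomial_aeval (cm M) (Polynomial.monomial k 1)
      ⟨μ, hμ, rfl⟩
    simpa [Polynomial.aeval_monomial, Polynomial.eval_monomial] using this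
  calc ‖μ‖ ^ k = ‖μ ^ k‖ := by
        rw [norm_pow]
    _ ≤ ‖cm M ^ k‖ := spectrum.norm_le_norm_of_mem pm
    _ = ‖M ^ k‖ := by rw [← cm_pow, norm_cm]

lemma le_specRadAux (M : Matrix (Fin n) (Fin n) ℝ) {μ : ℂ}
    (hμ : μ ∈ spectrum ℂ (cm M)) :
    ‖μ‖ ≤ sSup {r : ℝ | ∃ ν ∈ spectrum ℂ (cm M), ‖ν‖ = r} := by
  haveI : Nonempty (Fin n) := ⟨⟨0, hn⟩⟩
  apply le_csSup
  · refine ⟨‖cm M‖, ?_⟩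
    rintro r ⟨ν, hν, rfl⟩
    exact spectrum.norm_le_norm_of_mem hν
  · exact ⟨μ, hμ, rfl⟩

lemma specRadAux_nonneg (M : Matrix (Fin n) (Fin n) ℝ) :
    0 ≤ sSup {r : ℝ | ∃ ν ∈ spectrum ℂ (cm M), ‖ν‖ = r} := by
  haveI : Nonempty (Fin n) := ⟨⟨0, hn⟩⟩
  obtain ⟨μ, hμ⟩ := spectrum.nonempty (cm M)
  exact (norm_nonneg μ).trans (le_specRadAux hn M hμ)

lemma specRadAux_le (M : Matrix (Fin n) (Fin n) ℝ) {r : ℝ} (hr : 0 ≤ r)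
    (h : ∀ μ ∈ spectrum ℂ (cm M), ‖μ‖ ≤ r) :
    sSup {s : ℝ | ∃ ν ∈ spectrum ℂ (cm M), ‖ν‖ = s} ≤ r := by
  apply Real.sSup_le _ hr
  rintro s ⟨ν, hν, rfl⟩
  exact h ν hν

lemma spectralRadius_ne_top (M : Matrix (Fin n) (Fin n) ℝ) :
    spectralRadius ℂ (cm M) ≠ ⊤ := by
  haveI : Nonempty (Fin n) := ⟨⟨0, hn⟩⟩
  exact ((spectrum.spectralRadius_le_nnnorm (𝕜 := ℂ) (cm M)).trans_lt ENNReal.coe_lt_top).ne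

lemma toReal_spectralRadius_le (M : Matrix (Fin n) (Fin n) ℝ) :
    (spectralRadius ℂ (cm M)).toReal ≤
      sSup {r : ℝ | ∃ ν ∈ spectrum ℂ (cm M), ‖ν‖ = r} := by
  haveI : Nonempty (Fin n) := ⟨⟨0, hn⟩⟩
  set S := sSup {r : ℝ | ∃ ν ∈ spectrum ℂ (cm M), ‖ν‖ = r} with hS
  have h1 : spectralRadius ℂ (cm M) ≤ ENNReal.ofReal S := by
    apply iSup₂_le
    intro μ hμ
    rw [← ENNReal.ofReal_coe_nnreal, coe_nnnorm]
    apply ENNReal.ofReal_le_ofReal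
    exact le_specRadAux hn M hμ
  exact ENNReal.toReal_le_of_le_ofReal (specRadAux_nonneg hn M) h1

lemma tendsto_gelfand (M : Matrix (Fin n) (Fin n) ℝ) :
    Tendsto (fun k : ℕ => ‖M ^ k‖ ^ (1 / (k : ℝ))) atTop
      (𝓝 ((spectralRadius ℂ (cm M)).toReal)) := by
  haveI : Nonempty (Fin n) := ⟨⟨0, hn⟩⟩
  have h := spectrum.pow_norm_pow_one_div_tendsto_nhds_spectralRadius (cm M)
  have h2 := (ENNReal.tendsto_toReal (spectralRadius_ne_top hn M)).comp h
  apply h2.congr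
  intro k
  simp only [Function.comp_apply]
  rw [ENNReal.toReal_ofReal (Real.rpow_nonneg (norm_nonneg _) _), ← cm_pow, norm_cm]

lemma le_specRad (M : Matrix (Fin n) (Fin n) ℝ) {μ : ℂ}
    (hμ : μ ∈ spectrum ℂ (cm M)) : ‖μ‖ ≤ specRad M :=
  le_specRadAux hn M hμ

lemma specRad_nonneg (M : Matrix (Fin n) (Fin n) ℝ) : 0 ≤ specRad M :=
  specRadAux_nonneg hn M

lemma specRad_le (M : Matrix (Fin n) (Fin n) ℝ) {r : ℝ} (hr : 0 ≤ r)
    (h : ∀ μ ∈ spectrum ℂ (cm M), ‖μ‖ ≤ r) : specRad M ≤ r :=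
  specRadAux_le hn M hr h

lemma toReal_le_specRad (M : Matrix (Fin n) (Fin n) ℝ) :
    (spectralRadius ℂ (cm M)).toReal ≤ specRad M :=
  toReal_spectralRadius_le hn M

end Spectral

end SpecRadAux

open SpecRadAux

theorem spectral_radius_hadamard_le {n : ℕ} (A B : Matrix (Fin n) (Fin n) ℝ)
    (hA : ∀ i j, 0 ≤ A i j) (hB : ∀ i j, 0 ≤ B i j) :
    specRad (A.hadamard B) ≤ Real.sqrt (specRad ((A.hadamard A) * (B.hadamard B))) ∧
    Real.sqrt (specRad ((A.hadamard A) * (B.hadamard B))) ≤ specRad (A * B) := by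
  rcases Nat.eq_zero_or_pos n with hn | hn
  · subst hn
    haveI : Subsingleton (Matrix (Fin 0) (Fin 0) ℂ) := ⟨fun a b => by ext i j; exact i.elim0⟩
    have he : ∀ M : Matrix (Fin 0) (Fin 0) ℝ, specRad M = 0 := by
      intro M
      have hs : {r : ℝ | ∃ μ ∈ spectrum ℂ (M.map (fun a => (a : ℂ))),
          ‖μ‖ = r} = ∅ := by
        ext r
        simp only [Set.mem_setOf_eq, Set.mem_empty_iff_false, iff_false, not_exists]
        rintro μ ⟨hμ, -⟩
        exact (spectrum.mem_iff.mp hμ) (isUnit_of_subsingleton _)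
      rw [specRad, hs, Real.sSup_empty]
    rw [he, he, he]
    simp
  · -- main case
    have hAA : ∀ i j, 0 ≤ (A.hadamard A) i j := fun i j => by
      rw [Matrix.hadamard_apply]; exact mul_nonneg (hA i j) (hA i j)
    have hBB : ∀ i j, 0 ≤ (B.hadamard B) i j := fun i j => by
      rw [Matrix.hadamard_apply]; exact mul_nonneg (hB i j) (hB i j)
    have hAB : ∀ i j, 0 ≤ (A.hadamard B) i j := fun i j => by
      rw [Matrix.hadamard_apply]; exact mul_nonneg (hA i j) (hB i j)
    set C := (A.hadamard A) * (B.hadamard B) with hCdef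
    set D := (B.hadamard B) * (A.hadamard A) with hDdef
    have hC : ∀ i j, 0 ≤ C i j := mul_entry_nonneg hAA hBB
    have hD : ∀ i j, 0 ≤ D i j := mul_entry_nonneg hBB hAA
    have hM : ∀ i j, 0 ≤ (A * B) i j := mul_entry_nonneg hA hB
    have hP2 : ∀ i j, 0 ≤ ((A.hadamard B) * (A.hadamard B)) i j := mul_entry_nonneg hAB hAB
    -- base entrywise Cauchy–Schwarz bounds
    have hPCD : ∀ i j, (((A.hadamard B) * (A.hadamard B)) i j) ^ 2 ≤ C i j * D i j := by
      intro i j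
      rw [hCdef, hDdef]
      simp only [Matrix.mul_apply, Matrix.hadamard_apply]
      apply sum_sq_le
      · intro t; exact mul_nonneg (mul_nonneg (hA i t) (hB i t)) (mul_nonneg (hA t j) (hB t j))
      · intro t; exact mul_nonneg (mul_nonneg (hA i t) (hA i t)) (mul_nonneg (hB t j) (hB t j))
      · intro t; exact mul_nonneg (mul_nonneg (hB i t) (hB i t)) (mul_nonneg (hA t j) (hA t j))
      · intro t; apply le_of_eq; ring
    have hCM : ∀ i j, C i j ≤ ((A * B) i j) ^ 2 := by
      intro i j
      rw [hCdef]
      simp only [Matrix.mul_apply, Matrix.hadamard_apply]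
      calc ∑ t, (A i t * A i t) * (B t j * B t j) = ∑ t, (A i t * B t j) ^ 2 :=
            Finset.sum_congr rfl fun t _ => by ring
        _ ≤ (∑ t, A i t * B t j) ^ 2 :=
            Finset.sum_sq_le_sq_sum_of_nonneg fun t _ => mul_nonneg (hA i t) (hB t j)
    have hρ0 : (0:ℝ) ≤ (spectralRadius ℂ (cm C)).toReal := ENNReal.toReal_nonneg
    constructor
    · -- Part 1
      apply specRad_le hn _ (Real.sqrt_nonneg _)
      intro μ hμ
      have key : ‖μ‖ ^ 2 ≤ (spectralRadius ℂ (cm C)).toReal := by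
        set ρ := (spectralRadius ℂ (cm C)).toReal with hρ
        set K : ℝ := ‖A.hadamard A‖ * ‖B.hadamard B‖ + 1 with hKdef
        have hK0 : (0:ℝ) < K := by
          have := norm_nonneg (A.hadamard A)
          have := norm_nonneg (B.hadamard B)
          have := mul_nonneg (norm_nonneg (A.hadamard A)) (norm_nonneg (B.hadamard B))
          rw [hKdef]; linarith
        have hDk : ∀ m : ℕ, ‖D ^ (m + 1)‖ ≤ K * ‖C ^ m‖ := by
          intro m
          rw [hDdef, pow_succ_sandwich (A.hadamard A) (B.hadamard B) m, ← hCdef]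
          calc ‖(B.hadamard B) * C ^ m * (A.hadamard A)‖
              ≤ ‖(B.hadamard B) * C ^ m‖ * ‖A.hadamard A‖ := Matrix.linfty_opNorm_mul _ _
            _ ≤ (‖B.hadamard B‖ * ‖C ^ m‖) * ‖A.hadamard A‖ :=
                mul_le_mul_of_nonneg_right (Matrix.linfty_opNorm_mul _ _) (norm_nonneg _)
            _ = (‖A.hadamard A‖ * ‖B.hadamard B‖) * ‖C ^ m‖ := by ring
            _ ≤ K * ‖C ^ m‖ := by
                apply mul_le_mul_of_nonneg_right _ (norm_nonneg _)
                rw [hKdef]; linarith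
        have hEv : ∀ᶠ k : ℕ in atTop,
            ‖μ‖ ^ 2 ≤ (K * ‖C ^ k‖ * ‖C ^ (k - 1)‖) ^ (1 / (2 * (k:ℝ))) := by
          filter_upwards [eventually_ge_atTop 1] with k hk
          obtain ⟨m, rfl⟩ : ∃ m, k = m + 1 := ⟨k - 1, by omega⟩
          simp only [Nat.add_sub_cancel]
          set z := K * ‖C ^ (m + 1)‖ * ‖C ^ m‖ with hz
          have hz0 : (0:ℝ) ≤ z := by
            rw [hz]
            exact mul_nonneg (mul_nonneg hK0.le (norm_nonneg _)) (norm_nonneg _)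
          have h5 : (‖μ‖ ^ 2) ^ (m + 1) ≤ Real.sqrt z := by
            calc (‖μ‖ ^ 2) ^ (m + 1) = ‖μ‖ ^ (2 * (m + 1)) := by
                  rw [← pow_mul]
              _ ≤ ‖(A.hadamard B) ^ (2 * (m + 1))‖ := abs_pow_le_norm_pow hn _ hμ _
              _ = ‖((A.hadamard B) * (A.hadamard B)) ^ (m + 1)‖ := by
                  rw [pow_mul]; norm_num [pow_two]
              _ ≤ Real.sqrt (‖C ^ (m + 1)‖ * ‖D ^ (m + 1)‖) :=
                  norm_le_sqrt (pow_entry_nonneg hP2 _) (pow_entry_nonneg hC _)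
                    (pow_entry_nonneg hD _) (pow_sq_le hP2 hC hD hPCD (m + 1))
              _ ≤ Real.sqrt z := by
                  apply Real.sqrt_le_sqrt
                  rw [hz]
                  calc ‖C ^ (m + 1)‖ * ‖D ^ (m + 1)‖ ≤ ‖C ^ (m + 1)‖ * (K * ‖C ^ m‖) :=
                        mul_le_mul_of_nonneg_left (hDk m) (norm_nonneg _)
                    _ = K * ‖C ^ (m + 1)‖ * ‖C ^ m‖ := by ring
          have hm0 : (m + 1 : ℕ) ≠ 0 := Nat.succ_ne_zero m
          calc ‖μ‖ ^ 2
              = ((‖μ‖ ^ 2) ^ (m + 1)) ^ (((m + 1 : ℕ):ℝ))⁻¹ :=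
                (Real.pow_rpow_inv_natCast (sq_nonneg _) hm0).symm
            _ ≤ (Real.sqrt z) ^ (((m + 1 : ℕ):ℝ))⁻¹ :=
                Real.rpow_le_rpow (pow_nonneg (sq_nonneg _) _) h5 (by positivity)
            _ = (z ^ ((1:ℝ)/2)) ^ (((m + 1 : ℕ):ℝ))⁻¹ := by rw [Real.sqrt_eq_rpow]
            _ = z ^ (1 / (2 * ((m + 1 : ℕ):ℝ))) := by
                rw [← Real.rpow_mul hz0]
                congr 1
                ring
        -- the limit of the bounding sequence is ρ
        have hg := tendsto_gelfand hn C
        have T1 : Tendsto (fun k : ℕ => K ^ (1 / (2 * (k:ℝ)))) atTop (𝓝 1) := by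
          have h2k : Tendsto (fun k : ℕ => 2 * (k:ℝ)) atTop atTop :=
            Tendsto.const_mul_atTop two_pos tendsto_natCast_atTop_atTop
          have he : Tendsto (fun k : ℕ => 1 / (2 * (k:ℝ))) atTop (𝓝 0) :=
            h2k.inv_tendsto_atTop.congr fun k => by rw [Pi.inv_apply, one_div]
          have hc : ContinuousAt (fun y : ℝ => K ^ y) 0 :=
            Real.continuousAt_const_rpow hK0.ne'
          simpa [Function.comp_def, Real.rpow_zero] using hc.tendsto.comp he
        have T2 : Tendsto (fun k : ℕ => ‖C ^ k‖ ^ (1 / (2 * (k:ℝ)))) atTop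
            (𝓝 (Real.sqrt ρ)) := by
          have h2 : Tendsto (fun k : ℕ => (‖C ^ k‖ ^ (1 / (k:ℝ))) ^ ((1:ℝ)/2)) atTop
              (𝓝 (ρ ^ ((1:ℝ)/2))) :=
            hg.rpow_const (Or.inr (by norm_num))
          rw [← Real.sqrt_eq_rpow] at h2
          apply h2.congr
          intro k
          rw [← Real.rpow_mul (norm_nonneg _)]
          congr 1
          ring
        have T3 : Tendsto (fun k : ℕ => ‖C ^ (k - 1)‖ ^ (1 / (2 * (k:ℝ)))) atTop
            (𝓝 (Real.sqrt ρ)) := by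
          have hg' : Tendsto (fun k : ℕ => ‖C ^ (k - 1)‖ ^ (1 / ((k - 1 : ℕ):ℝ))) atTop
              (𝓝 ρ) := hg.comp (tendsto_sub_atTop_nat 1)
          have he : Tendsto (fun k : ℕ => ((k:ℝ) - 1) / (2 * (k:ℝ))) atTop (𝓝 ((1:ℝ)/2)) := by
            have h1 : Tendsto (fun k : ℕ => (1 - (k:ℝ)⁻¹) / 2) atTop (𝓝 ((1:ℝ)/2)) := by
              have hinv : Tendsto (fun k : ℕ => (k:ℝ)⁻¹) atTop (𝓝 0) :=
                tendsto_inv_atTop_nhds_zero_nat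
              have h2 := (tendsto_const_nhds (x := (1:ℝ)) (f := atTop)).sub hinv
              have h3 := h2.div_const 2
              simpa using h3
            apply h1.congr'
            filter_upwards [eventually_ge_atTop 1] with k hk
            have hk0 : (k:ℝ) ≠ 0 := by
              have : (0:ℝ) < k := by exact_mod_cast hk
              linarith
            have h4 : (1 - (k:ℝ)⁻¹) = ((k:ℝ) - 1) / k := by
              rw [sub_div, div_self hk0, one_div]
            rw [h4, div_div]
            ring_nf
          have h2 : Tendsto (fun k : ℕ =>
              (‖C ^ (k - 1)‖ ^ (1 / ((k - 1 : ℕ):ℝ))) ^ (((k:ℝ) - 1) / (2 * (k:ℝ)))) atTop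
              (𝓝 (ρ ^ ((1:ℝ)/2))) :=
            hg'.rpow he (Or.inr (by norm_num))
          rw [← Real.sqrt_eq_rpow] at h2
          apply h2.congr'
          filter_upwards [eventually_ge_atTop 2] with k hk
          have hk1 : (1:ℕ) ≤ k := by omega
          have hcast : ((k - 1 : ℕ):ℝ) = (k:ℝ) - 1 := by
            push_cast [hk1]
            ring
          rw [hcast, ← Real.rpow_mul (norm_nonneg _)]
          congr 1
          have hk2 : (2:ℝ) ≤ (k:ℝ) := by exact_mod_cast hk
          have hne : (k:ℝ) - 1 ≠ 0 := by linarith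
          have hne2 : (k:ℝ) ≠ 0 := by linarith
          field_simp
        have TF : Tendsto (fun k : ℕ => (K * ‖C ^ k‖ * ‖C ^ (k - 1)‖) ^ (1 / (2 * (k:ℝ))))
            atTop (𝓝 ρ) := by
          have h := (T1.mul T2).mul T3
          rw [show (1 * Real.sqrt ρ) * Real.sqrt ρ = ρ by
            rw [one_mul, Real.mul_self_sqrt hρ0]] at h
          apply h.congr
          intro k
          rw [← Real.mul_rpow hK0.le (norm_nonneg _),
            ← Real.mul_rpow (mul_nonneg hK0.le (norm_nonneg _)) (norm_nonneg _)]
        exact ge_of_tendsto TF hEv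
      calc ‖μ‖ = Real.sqrt (‖μ‖ ^ 2) :=
            (Real.sqrt_sq (norm_nonneg μ)).symm
        _ ≤ Real.sqrt (specRad C) :=
            Real.sqrt_le_sqrt (key.trans (toReal_le_specRad hn C))
    · -- Part 2
      have key : specRad C ≤ (specRad (A * B)) ^ 2 := by
        apply specRad_le hn _ (sq_nonneg _)
        intro μ hμ
        set ρM := (spectralRadius ℂ (cm (A * B))).toReal with hρM
        have hlim : Tendsto (fun k : ℕ => (‖(A * B) ^ k‖ ^ (1 / (k:ℝ))) ^ 2) atTop
            (𝓝 (ρM ^ 2)) := (tendsto_gelfand hn (A * B)).pow 2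
        have hEv : ∀ᶠ k : ℕ in atTop,
            ‖μ‖ ≤ (‖(A * B) ^ k‖ ^ (1 / (k:ℝ))) ^ 2 := by
          filter_upwards [eventually_ge_atTop 1] with k hk
          have hk0 : k ≠ 0 := by omega
          have h1 : ‖μ‖ ^ k ≤ ‖C ^ k‖ := abs_pow_le_norm_pow hn C hμ k
          have h2 : ‖C ^ k‖ ≤ ‖(A * B) ^ k‖ ^ 2 :=
            norm_le_sq (pow_entry_nonneg hC k) (pow_entry_nonneg hM k)
              (pow_le_sq hC hM hCM k)
          calc ‖μ‖ = (‖μ‖ ^ k) ^ ((k:ℝ))⁻¹ :=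
                (Real.pow_rpow_inv_natCast (norm_nonneg μ) hk0).symm
            _ ≤ (‖(A * B) ^ k‖ ^ 2) ^ ((k:ℝ))⁻¹ :=
                Real.rpow_le_rpow (pow_nonneg (norm_nonneg μ) k) (h1.trans h2)
                  (by positivity)
            _ = (‖(A * B) ^ k‖ ^ ((k:ℝ))⁻¹) ^ 2 := by
                rw [← Real.rpow_natCast_mul (norm_nonneg _), mul_comm,
                  Real.rpow_mul_natCast (norm_nonneg _)]
            _ = (‖(A * B) ^ k‖ ^ (1 / (k:ℝ))) ^ 2 := by rw [one_div]
        have hle : ‖μ‖ ≤ ρM ^ 2 := ge_of_tendsto hlim hEv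
        refine hle.trans ?_
        have := toReal_le_specRad hn (A * B)
        exact pow_le_pow_left₀ ENNReal.toReal_nonneg this 2
      calc Real.sqrt (specRad C) ≤ Real.sqrt ((specRad (A * B)) ^ 2) := Real.sqrt_le_sqrt key
        _ = specRad (A * B) := Real.sqrt_sq (specRad_nonneg hn (A * B))
end

section
/- (Zhan's conjecture) For all n×n matrices A and B with non-negative real entries, the spectral radius of the Hadamard product A∘B is at most the spectral radius of the conventional matrix product AB: ρ(A∘B) ≤ ρ(AB). -/
open Matrix Filter

namespace ZhanAux

open scoped ENNReal NNReal Topology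

attribute [local instance] Matrix.linftyOpNormedRing Matrix.linftyOpNormedAlgebra

variable {n : ℕ}

/-- The complexification of a real matrix. -/
noncomputable def mapC (X : Matrix (Fin n) (Fin n) ℝ) : Matrix (Fin n) (Fin n) ℂ :=
  X.map (fun a => (a : ℂ))

lemma mapC_apply (X : Matrix (Fin n) (Fin n) ℝ) (i j : Fin n) :
    mapC X i j = (X i j : ℂ) := rfl

lemma mapC_mul (X Y : Matrix (Fin n) (Fin n) ℝ) : mapC (X * Y) = mapC X * mapC Y :=
  Matrix.map_mul (f := Complex.ofRealHom)

lemma mapC_pow (X : Matrix (Fin n) (Fin n) ℝ) (k : ℕ) : mapC (X ^ k) = mapC X ^ k := by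
  induction k with
  | zero =>
    rw [pow_zero, pow_zero]
    exact Matrix.map_one _ (by simp) (by simp)
  | succ k ih => rw [pow_succ, pow_succ, mapC_mul, ih]

lemma sum_mul_sum_le {ι : Type*} (s : Finset ι) (f g : ι → ℝ)
    (hf : ∀ i, 0 ≤ f i) (hg : ∀ i, 0 ≤ g i) :
    ∑ i ∈ s, f i * g i ≤ (∑ i ∈ s, f i) * ∑ i ∈ s, g i := by
  calc ∑ i ∈ s, f i * g i ≤ ∑ i ∈ s, f i * ∑ j ∈ s, g j :=
        Finset.sum_le_sum fun i hi =>
          mul_le_mul_of_nonneg_left (Finset.single_le_sum (fun j _ => hg j) hi) (hf i)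
    _ = _ := (Finset.sum_mul _ _ _).symm

lemma pow_entry_nonneg {X : Matrix (Fin n) (Fin n) ℝ} (hX : ∀ i j, 0 ≤ X i j) :
    ∀ k i j, 0 ≤ (X ^ k) i j := by
  intro k
  induction k with
  | zero =>
    intro i j
    rw [pow_zero]
    by_cases h : i = j <;> simp [Matrix.one_apply, h]
  | succ k ih =>
    intro i j
    rw [pow_succ, Matrix.mul_apply]
    exact Finset.sum_nonneg fun m _ => mul_nonneg (ih i m) (hX m j)

lemma pow_entry_mono {X Y : Matrix (Fin n) (Fin n) ℝ} (hX : ∀ i j, 0 ≤ X i j)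
    (hXY : ∀ i j, X i j ≤ Y i j) : ∀ k i j, (X ^ k) i j ≤ (Y ^ k) i j := by
  have hY : ∀ i j, 0 ≤ Y i j := fun i j => (hX i j).trans (hXY i j)
  intro k
  induction k with
  | zero => intro i j; rw [pow_zero, pow_zero]
  | succ k ih =>
    intro i j
    rw [pow_succ, pow_succ, Matrix.mul_apply, Matrix.mul_apply]
    exact Finset.sum_le_sum fun m _ =>
      mul_le_mul (ih i m) (hXY m j) (hX m j) (pow_entry_nonneg hY k i m)

lemma had_entry_nonneg {X Y : Matrix (Fin n) (Fin n) ℝ} (hX : ∀ i j, 0 ≤ X i j)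
    (hY : ∀ i j, 0 ≤ Y i j) : ∀ i j, 0 ≤ (X.hadamard Y) i j := fun i j => by
  rw [Matrix.hadamard_apply]; exact mul_nonneg (hX i j) (hY i j)

lemma mul_entry_nonneg {X Y : Matrix (Fin n) (Fin n) ℝ} (hX : ∀ i j, 0 ≤ X i j)
    (hY : ∀ i j, 0 ≤ Y i j) : ∀ i j, 0 ≤ (X * Y) i j := fun i j => by
  rw [Matrix.mul_apply]
  exact Finset.sum_nonneg fun m _ => mul_nonneg (hX i m) (hY m j)

/-- Entrywise Cauchy–Schwarz-type estimate: `(A∘B)² ≤ (AB)∘(BA)`. -/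
lemma had_sq_le {A B : Matrix (Fin n) (Fin n) ℝ} (hA : ∀ i j, 0 ≤ A i j)
    (hB : ∀ i j, 0 ≤ B i j) :
    ∀ i j, ((A.hadamard B) * (A.hadamard B)) i j ≤ ((A * B).hadamard (B * A)) i j := by
  intro i j
  simp only [Matrix.mul_apply, Matrix.hadamard_apply]
  calc ∑ k, (A i k * B i k) * (A k j * B k j)
      = ∑ k, (A i k * B k j) * (B i k * A k j) := by
        apply Finset.sum_congr rfl; intro k _; ring
    _ ≤ (∑ k, A i k * B k j) * ∑ k, B i k * A k j :=
        sum_mul_sum_le _ _ _ (fun k => mul_nonneg (hA i k) (hB k j))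
          (fun k => mul_nonneg (hB i k) (hA k j))

/-- Entrywise: `(X∘Y)^k ≤ X^k ∘ Y^k` for nonnegative matrices. -/
lemma had_pow_le {X Y : Matrix (Fin n) (Fin n) ℝ} (hX : ∀ i j, 0 ≤ X i j)
    (hY : ∀ i j, 0 ≤ Y i j) :
    ∀ k i j, ((X.hadamard Y) ^ k) i j ≤ ((X ^ k).hadamard (Y ^ k)) i j := by
  intro k
  induction k with
  | zero =>
    intro i j
    simp only [pow_zero, Matrix.hadamard_apply]
    by_cases h : i = j <;> simp [Matrix.one_apply, h]
  | succ k ih =>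
    intro i j
    rw [pow_succ, Matrix.mul_apply, Matrix.hadamard_apply, pow_succ, pow_succ,
      Matrix.mul_apply, Matrix.mul_apply]
    calc ∑ m, ((X.hadamard Y) ^ k) i m * (X.hadamard Y) m j
        ≤ ∑ m, (((X ^ k).hadamard (Y ^ k)) i m) * (X.hadamard Y) m j :=
          Finset.sum_le_sum fun m _ =>
            mul_le_mul_of_nonneg_right (ih i m) (had_entry_nonneg hX hY m j)
      _ = ∑ m, ((X ^ k) i m * X m j) * ((Y ^ k) i m * Y m j) := by
          apply Finset.sum_congr rfl; intro m _
          simp only [Matrix.hadamard_apply]; ring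
      _ ≤ (∑ m, (X ^ k) i m * X m j) * ∑ m, (Y ^ k) i m * Y m j :=
          sum_mul_sum_le _ _ _
            (fun m => mul_nonneg (pow_entry_nonneg hX k i m) (hX m j))
            (fun m => mul_nonneg (pow_entry_nonneg hY k i m) (hY m j))

lemma nnnorm_mapC_mono {X Y : Matrix (Fin n) (Fin n) ℝ} (hX : ∀ i j, 0 ≤ X i j)
    (h : ∀ i j, X i j ≤ Y i j) : ‖mapC X‖₊ ≤ ‖mapC Y‖₊ := by
  rw [Matrix.linfty_opNNNorm_def, Matrix.linfty_opNNNorm_def]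
  apply Finset.sup_mono_fun
  intro i _
  apply Finset.sum_le_sum
  intro j _
  rw [mapC_apply, mapC_apply, Complex.nnnorm_real, Complex.nnnorm_real]
  have : |X i j| ≤ |Y i j| := by
    rw [abs_of_nonneg (hX i j), abs_of_nonneg ((hX i j).trans (h i j))]
    exact h i j
  simpa [← NNReal.coe_le_coe, Real.norm_eq_abs] using this

lemma nnnorm_mapC_hadamard (X Y : Matrix (Fin n) (Fin n) ℝ) :
    ‖mapC (X.hadamard Y)‖₊ ≤ ‖mapC X‖₊ * ‖mapC Y‖₊ := by
  conv_lhs => rw [Matrix.linfty_opNNNorm_def]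
  apply Finset.sup_le
  intro i _
  calc ∑ j, ‖mapC (X.hadamard Y) i j‖₊
      = ∑ j, ‖mapC X i j‖₊ * ‖mapC Y i j‖₊ := by
        apply Finset.sum_congr rfl; intro j _
        rw [mapC_apply, Matrix.hadamard_apply, Complex.ofReal_mul, nnnorm_mul]
        rfl
    _ ≤ ∑ j, ‖mapC X i j‖₊ * ‖mapC Y‖₊ := by
        apply Finset.sum_le_sum; intro j _
        apply mul_le_mul_of_nonneg_left _ zero_le
        calc ‖mapC Y i j‖₊ ≤ ∑ j', ‖mapC Y i j'‖₊ :=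
              Finset.single_le_sum (f := fun j' => ‖mapC Y i j'‖₊)
                (fun j' _ => zero_le) (Finset.mem_univ j)
          _ ≤ ‖mapC Y‖₊ := by
              rw [Matrix.linfty_opNNNorm_def]
              exact Finset.le_sup (f := fun i => ∑ j', ‖mapC Y i j'‖₊) (Finset.mem_univ i)
    _ = (∑ j, ‖mapC X i j‖₊) * ‖mapC Y‖₊ := (Finset.sum_mul _ _ _).symm
    _ ≤ ‖mapC X‖₊ * ‖mapC Y‖₊ := by
        apply mul_le_mul_of_nonneg_right _ zero_le
        rw [Matrix.linfty_opNNNorm_def]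
        exact Finset.le_sup (f := fun i => ∑ j, ‖mapC X i j‖₊) (Finset.mem_univ i)


section Analytic

set_option maxHeartbeats 1000000
set_option synthInstance.maxHeartbeats 1000000

/-- The `ℝ≥0∞`-valued spectral radius of the complexification. -/
noncomputable def rhoC (X : Matrix (Fin n) (Fin n) ℝ) : ℝ≥0∞ :=
  spectralRadius ℂ (mapC X)

lemma gelfand (X : Matrix (Fin n) (Fin n) ℝ) :
    Tendsto (fun k : ℕ => (‖mapC X ^ k‖₊ : ℝ≥0∞) ^ (1 / k : ℝ)) atTop (𝓝 (rhoC X)) :=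
  spectrum.pow_nnnorm_pow_one_div_tendsto_nhds_spectralRadius (mapC X)

lemma specRadius_mul_comm_le (a b : Matrix (Fin n) (Fin n) ℂ) :
    spectralRadius ℂ (a * b) ≤ spectralRadius ℂ (b * a) := by
  show (⨆ k ∈ spectrum ℂ (a * b), (‖k‖₊ : ℝ≥0∞)) ≤ ⨆ k ∈ spectrum ℂ (b * a), (‖k‖₊ : ℝ≥0∞)
  apply iSup₂_le
  intro k hk
  by_cases h : k = 0
  · simp [h]
  · have hk' : k ∈ spectrum ℂ (b * a) := by
      have : k ∈ spectrum ℂ (a * b) \ {0} := ⟨hk, h⟩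
      exact (spectrum.unit_mem_mul_comm (r := Units.mk0 k h)).mp hk
    exact le_iSup₂ (f := fun k (_ : k ∈ spectrum ℂ (b * a)) => (‖k‖₊ : ℝ≥0∞)) k hk'

lemma specRadius_mul_comm (a b : Matrix (Fin n) (Fin n) ℂ) :
    spectralRadius ℂ (a * b) = spectralRadius ℂ (b * a) :=
  le_antisymm (specRadius_mul_comm_le a b) (specRadius_mul_comm_le b a)

lemma rhoC_ne_top [Nonempty (Fin n)] (X : Matrix (Fin n) (Fin n) ℝ) : rhoC X ≠ ⊤ :=
  ((spectrum.spectralRadius_le_nnnorm (𝕜 := ℂ) (mapC X)).trans_lt ENNReal.coe_lt_top).ne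

/-- The main estimate at the level of `ℝ≥0∞` spectral radii. -/
lemma rhoC_le [Nonempty (Fin n)] (A B : Matrix (Fin n) (Fin n) ℝ)
    (hA : ∀ i j, 0 ≤ A i j) (hB : ∀ i j, 0 ≤ B i j) :
    rhoC (A.hadamard B) ≤ rhoC (A * B) := by
  have hAB := mul_entry_nonneg hA hB
  have hBA := mul_entry_nonneg hB hA
  have hHad := had_entry_nonneg hA hB
  -- pointwise norm bound
  have key : ∀ k : ℕ, ‖mapC (A.hadamard B) ^ (2 * k)‖₊ ≤
      ‖mapC (A * B) ^ k‖₊ * ‖mapC (B * A) ^ k‖₊ := by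
    intro k
    rw [← mapC_pow, ← mapC_pow, ← mapC_pow]
    calc ‖mapC ((A.hadamard B) ^ (2 * k))‖₊
        ≤ ‖mapC (((A * B) ^ k).hadamard ((B * A) ^ k))‖₊ := by
          apply nnnorm_mapC_mono (pow_entry_nonneg hHad (2 * k))
          intro i j
          calc ((A.hadamard B) ^ (2 * k)) i j
              = (((A.hadamard B) * (A.hadamard B)) ^ k) i j := by
                rw [← sq, ← pow_mul]
            _ ≤ (((A * B).hadamard (B * A)) ^ k) i j :=
                pow_entry_mono (mul_entry_nonneg hHad hHad) (had_sq_le hA hB) k i j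
            _ ≤ (((A * B) ^ k).hadamard ((B * A) ^ k)) i j :=
                had_pow_le hAB hBA k i j
      _ ≤ ‖mapC ((A * B) ^ k)‖₊ * ‖mapC ((B * A) ^ k)‖₊ :=
          nnnorm_mapC_hadamard _ _
  -- the subsequence of the Gelfand sequence for `A∘B`
  have h2 : Tendsto (fun k : ℕ => 2 * k) atTop atTop :=
    tendsto_atTop_mono (fun k => by simp; omega) tendsto_id
  have T1 := (gelfand (A.hadamard B)).comp h2
  -- the bounding sequence
  have hxfin : (rhoC (A * B)) ^ (1 / 2 : ℝ) ≠ ⊤ :=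
    (ENNReal.rpow_lt_top_of_nonneg (by norm_num) (rhoC_ne_top _)).ne
  have hyfin : (rhoC (B * A)) ^ (1 / 2 : ℝ) ≠ ⊤ :=
    (ENNReal.rpow_lt_top_of_nonneg (by norm_num) (rhoC_ne_top _)).ne
  have T2 := ENNReal.Tendsto.mul ((gelfand (A * B)).ennrpow_const (1 / 2))
    (Or.inr hyfin) ((gelfand (B * A)).ennrpow_const (1 / 2)) (Or.inr hxfin)
  have hle : rhoC (A.hadamard B) ≤
      (rhoC (A * B)) ^ (1 / 2 : ℝ) * (rhoC (B * A)) ^ (1 / 2 : ℝ) := by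
    refine le_of_tendsto_of_tendsto' T1 T2 fun k => ?_
    show (‖mapC (A.hadamard B) ^ (2 * k)‖₊ : ℝ≥0∞) ^ (1 / ((2 * k : ℕ) : ℝ)) ≤ _
    have he : (1 / ((2 * k : ℕ) : ℝ)) = (1 / (k : ℝ)) * (1 / 2) := by
      push_cast; ring
    calc (‖mapC (A.hadamard B) ^ (2 * k)‖₊ : ℝ≥0∞) ^ (1 / ((2 * k : ℕ) : ℝ))
        ≤ ((‖mapC (A * B) ^ k‖₊ * ‖mapC (B * A) ^ k‖₊ : ℝ≥0) : ℝ≥0∞) ^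
            (1 / ((2 * k : ℕ) : ℝ)) := by
          apply ENNReal.rpow_le_rpow _ (by positivity)
          exact_mod_cast key k
      _ = ((‖mapC (A * B) ^ k‖₊ : ℝ≥0∞)) ^ (1 / ((2 * k : ℕ) : ℝ)) *
            ((‖mapC (B * A) ^ k‖₊ : ℝ≥0∞)) ^ (1 / ((2 * k : ℕ) : ℝ)) := by
          rw [ENNReal.coe_mul, ENNReal.mul_rpow_of_nonneg _ _ (by positivity)]
      _ = ((‖mapC (A * B) ^ k‖₊ : ℝ≥0∞) ^ (1 / (k : ℝ))) ^ (1 / 2 : ℝ) *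
            ((‖mapC (B * A) ^ k‖₊ : ℝ≥0∞) ^ (1 / (k : ℝ))) ^ (1 / 2 : ℝ) := by
          rw [← ENNReal.rpow_mul, ← ENNReal.rpow_mul, he]
  have hswap : rhoC (B * A) = rhoC (A * B) := by
    show spectralRadius ℂ (mapC (B * A)) = spectralRadius ℂ (mapC (A * B))
    rw [mapC_mul, mapC_mul]
    exact specRadius_mul_comm _ _
  rw [hswap] at hle
  calc rhoC (A.hadamard B) ≤ _ := hle
    _ = rhoC (A * B) ^ ((1 : ℝ) / 2 + 1 / 2) :=
        (ENNReal.rpow_add_of_nonneg _ _ (by norm_num) (by norm_num)).symm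
    _ = rhoC (A * B) := by norm_num

end Analytic

end ZhanAux

attribute [local instance] Matrix.linftyOpNormedRing Matrix.linftyOpNormedAlgebra

set_option maxHeartbeats 1000000 in
set_option synthInstance.maxHeartbeats 1000000 in
theorem zhan_conjecture {n : ℕ} (A B : Matrix (Fin n) (Fin n) ℝ)
    (hA : ∀ i j, 0 ≤ A i j) (hB : ∀ i j, 0 ≤ B i j) :
    specRad (A.hadamard B) ≤ specRad (A * B) := by
  rcases Nat.eq_zero_or_pos n with h0 | hpos
  · subst h0
    have he : ∀ M : Matrix (Fin 0) (Fin 0) ℝ, specRad M = 0 := by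
      intro M
      haveI : Subsingleton (Matrix (Fin 0) (Fin 0) ℂ) :=
        ⟨fun a b => by ext i j; exact i.elim0⟩
      have : {r : ℝ | ∃ μ ∈ spectrum ℂ (M.map (fun a => (a : ℂ))), ‖μ‖ = r} = ∅ := by
        apply Set.eq_empty_iff_forall_notMem.2
        rintro r ⟨μ, hμ, -⟩
        exact (spectrum.mem_iff.mp hμ) (isUnit_of_subsingleton _)
      rw [specRad, this, Real.sSup_empty]
    rw [he, he]
  · haveI : Nonempty (Fin n) := Fin.pos_iff_nonempty.mp hpos
    haveI : NeZero n := ⟨hpos.ne'⟩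
    set a := ZhanAux.mapC (A.hadamard B) with ha
    set b := ZhanAux.mapC (A * B) with hb
    have hrad : spectralRadius ℂ a ≤ spectralRadius ℂ b := ZhanAux.rhoC_le A B hA hB
    set S : Set ℝ := {r : ℝ | ∃ μ ∈ spectrum ℂ ((A * B).map (fun x => (x : ℂ))), ‖μ‖ = r}
      with hS
    have hSb : S = {r : ℝ | ∃ μ ∈ spectrum ℂ b, ‖μ‖ = r} := rfl
    have hbdd : BddAbove S := by
      refine ⟨‖b‖, ?_⟩
      rintro r ⟨μ, hμ, rfl⟩
      exact spectrum.norm_le_norm_of_mem hμ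
    obtain ⟨μ₀, hμ₀⟩ := spectrum.nonempty b
    have h0b : (0 : ℝ) ≤ specRad (A * B) := by
      have : ‖μ₀‖ ∈ S := ⟨μ₀, hμ₀, rfl⟩
      exact le_trans (norm_nonneg μ₀) (le_csSup hbdd this)
    have hub : spectralRadius ℂ b ≤ ENNReal.ofReal (specRad (A * B)) := by
      show (⨆ μ ∈ spectrum ℂ b, (‖μ‖₊ : ENNReal)) ≤ _
      apply iSup₂_le
      intro μ hμ
      have h1 : ‖μ‖ ≤ specRad (A * B) := le_csSup hbdd ⟨μ, hμ, rfl⟩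
      calc (‖μ‖₊ : ENNReal) = ENNReal.ofReal ‖μ‖ := (ofReal_norm μ).symm
        _ ≤ ENNReal.ofReal (specRad (A * B)) := ENNReal.ofReal_le_ofReal h1
    apply Real.sSup_le _ h0b
    rintro r ⟨μ, hμ, rfl⟩
    have h2 : (‖μ‖₊ : ENNReal) ≤ ENNReal.ofReal (specRad (A * B)) := by
      refine le_trans (le_trans ?_ hrad) hub
      exact le_iSup₂ (f := fun μ (_ : μ ∈ spectrum ℂ a) => (‖μ‖₊ : ENNReal)) μ hμ
    rw [show (‖μ‖₊ : ENNReal) = ENNReal.ofReal ‖μ‖ from (ofReal_norm μ).symm] at h2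
    have h3 : ‖μ‖ ≤ specRad (A * B) := (ENNReal.ofReal_le_ofReal_iff h0b).mp h2
    simpa using h3
end

section
/- For every n×n real matrix A all of whose entries are strictly positive, the sequence (Tr(A^m))^{1/m} converges to the spectral radius ρ(A) as m → ∞. -/
open Matrix Filter

open scoped ENNReal NNReal Topology

attribute [local instance] Matrix.linftyOpNormedRing Matrix.linftyOpNormedAlgebra

variable {n : ℕ}

example : CompleteSpace (Matrix (Fin n) (Fin n) ℂ) := by infer_instance

lemma aux_rowsum_le_norm (N : Matrix (Fin n) (Fin n) ℂ) (i : Fin n) :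
    ∑ j, ‖N i j‖ ≤ ‖N‖ := by
  rw [Matrix.linfty_opNorm_def]
  have h : (∑ j, ‖N i j‖₊ : ℝ≥0) ≤ Finset.univ.sup fun i => ∑ j, ‖N i j‖₊ :=
    Finset.le_sup (f := fun i => ∑ j, ‖N i j‖₊) (Finset.mem_univ i)
  calc ∑ j, ‖N i j‖ = ((∑ j, ‖N i j‖₊ : ℝ≥0) : ℝ) := by
        simp only [NNReal.coe_sum, coe_nnnorm]
    _ ≤ _ := by exact_mod_cast h

lemma aux_norm_le_total (N : Matrix (Fin n) (Fin n) ℂ) :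
    ‖N‖ ≤ ∑ i, ∑ j, ‖N i j‖ := by
  rw [Matrix.linfty_opNorm_def]
  have h : (Finset.univ.sup fun i => ∑ j, ‖N i j‖₊ : ℝ≥0) ≤ ∑ i, ∑ j, ‖N i j‖₊ :=
    Finset.sup_le fun i _ => Finset.single_le_sum (f := fun i => ∑ j, ‖N i j‖₊) (fun i _ => zero_le) (Finset.mem_univ i)
  calc (↑(Finset.univ.sup fun i => ∑ j, ‖N i j‖₊ : ℝ≥0) : ℝ)
      ≤ ((∑ i, ∑ j, ‖N i j‖₊ : ℝ≥0) : ℝ) := by exact_mod_cast h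
    _ = ∑ i, ∑ j, ‖N i j‖ := by simp only [NNReal.coe_sum, coe_nnnorm]

lemma aux_trace_le (M : Matrix (Fin n) (Fin n) ℝ) (hM : ∀ i j, 0 ≤ M i j) :
    Matrix.trace M ≤ n * ‖M.map (fun a => (a : ℂ))‖ := by
  have h1 : ∀ i : Fin n, M i i ≤ ‖M.map (fun a => (a : ℂ))‖ := by
    intro i
    calc M i i ≤ ∑ j, M i j :=
          Finset.single_le_sum (f := fun j => M i j) (fun j _ => hM i j) (Finset.mem_univ i)
      _ = ∑ j, ‖(M.map (fun a => (a : ℂ))) i j‖ := by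
          simp [Matrix.map_apply, Complex.norm_real, Real.norm_eq_abs, abs_of_nonneg (hM i _)]
      _ ≤ _ := aux_rowsum_le_norm _ i
  calc Matrix.trace M = ∑ i, M i i := rfl
    _ ≤ ∑ _i : Fin n, ‖M.map (fun a => (a : ℂ))‖ := Finset.sum_le_sum fun i _ => h1 i
    _ = n * ‖M.map (fun a => (a : ℂ))‖ := by simp [mul_comm]

lemma aux_norm_le_sum (M : Matrix (Fin n) (Fin n) ℝ) (hM : ∀ i j, 0 ≤ M i j) :
    ‖M.map (fun a => (a : ℂ))‖ ≤ ∑ i, ∑ j, M i j := by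
  refine (aux_norm_le_total _).trans_eq ?_
  simp [Matrix.map_apply, Complex.norm_real, Real.norm_eq_abs, abs_of_nonneg, hM _ _]

lemma aux_entry_le_norm (M : Matrix (Fin n) (Fin n) ℝ) (hM : ∀ i j, 0 ≤ M i j)
    (i j : Fin n) : M i j ≤ ‖M.map (fun a => (a : ℂ))‖ := by
  refine le_trans ?_ (aux_rowsum_le_norm _ i)
  calc M i j = ‖(M.map (fun a => (a : ℂ))) i j‖ := by
        simp [Matrix.map_apply, Complex.norm_real, Real.norm_eq_abs, abs_of_nonneg (hM i j)]
    _ ≤ _ := Finset.single_le_sum (f := fun j => ‖(M.map (fun a => (a:ℂ))) i j‖)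
        (fun j _ => norm_nonneg _) (Finset.mem_univ j)

lemma aux_map_pow (A : Matrix (Fin n) (Fin n) ℝ) (m : ℕ) :
    (A.map (fun a => (a : ℂ))) ^ m = (A ^ m).map (fun a => (a : ℂ)) := by
  have : A.map (fun a => (a : ℂ)) = Complex.ofRealHom.mapMatrix A := rfl
  rw [this, ← map_pow]; rfl

lemma aux_inv_nat_tendsto : Tendsto (fun m : ℕ => ((m : ℝ))⁻¹) atTop (𝓝 0) := by
  simpa [one_div] using tendsto_one_div_atTop_nhds_zero_nat (𝕜 := ℝ)

lemma aux_rpow_tendsto_one {c : ℝ} (hc : 0 < c) :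
    Tendsto (fun m : ℕ => c ^ ((m : ℝ)⁻¹)) atTop (𝓝 1) := by
  have h : Tendsto (fun m : ℕ => Real.log c * (m : ℝ)⁻¹) atTop (𝓝 0) := by
    simpa using aux_inv_nat_tendsto.const_mul (Real.log c)
  have h2 := (Real.continuous_exp.tendsto 0).comp h
  simp only [Function.comp_def, Real.exp_zero] at h2
  refine h2.congr fun m => ?_
  rw [Real.rpow_def_of_pos hc]

lemma aux_pow_entry (A : Matrix (Fin n) (Fin n) ℝ) {ε : ℝ} (hε : 0 < ε)
    (hA : ∀ i j, ε ≤ A i j) :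
    ∀ m, ∀ i j, ε ^ (m + 1) ≤ (A ^ (m + 1)) i j := by
  intro m
  induction m with
  | zero => intro i j; simpa using hA i j
  | succ m ih =>
    intro i j
    have hmul : A ^ (m + 1 + 1) = A ^ (m + 1) * A := pow_succ A (m + 1)
    rw [hmul, Matrix.mul_apply]
    have key : ε ^ (m + 1) * ε ≤ (A ^ (m + 1)) i i * A i j :=
      mul_le_mul (ih i i) (hA i j) hε.le ((pow_pos hε _).le.trans (ih i i))
    calc ε ^ (m + 1 + 1) = ε ^ (m + 1) * ε := by ring
      _ ≤ (A ^ (m + 1)) i i * A i j := key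
      _ ≤ ∑ k, (A ^ (m + 1)) i k * A k j := by
          refine Finset.single_le_sum (f := fun k => (A ^ (m + 1)) i k * A k j)
            (fun k _ => mul_nonneg ((pow_pos hε _).le.trans (ih i k))
              (hε.le.trans (hA k j))) (Finset.mem_univ i)

lemma aux_exists_eps (A : Matrix (Fin n) (Fin n) ℝ) (hA : ∀ i j, 0 < A i j) :
    ∃ ε > 0, ∀ i j, ε ≤ A i j := by
  cases isEmpty_or_nonempty (Fin n) with
  | inl h => exact ⟨1, one_pos, fun i => (h.elim i)⟩
  | inr h =>
    refine ⟨Finset.univ.inf' Finset.univ_nonempty (fun p : Fin n × Fin n => A p.1 p.2), ?_, ?_⟩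
    · exact (Finset.lt_inf'_iff _).mpr fun p _ => hA p.1 p.2
    · intro i j
      exact Finset.inf'_le _ (Finset.mem_univ (i, j))

lemma aux_pow_nonneg (A : Matrix (Fin n) (Fin n) ℝ) (hA : ∀ i j, 0 < A i j) :
    ∀ m, ∀ i j, 0 ≤ (A ^ m) i j := by
  intro m i j
  cases m with
  | zero => simp [Matrix.one_apply]; positivity
  | succ m =>
    obtain ⟨ε, hε, hεA⟩ := aux_exists_eps A hA
    exact le_trans (pow_pos hε _).le (aux_pow_entry A hε hεA m i j)

lemma aux_trace_lower (A : Matrix (Fin n) (Fin n) ℝ) (hn : 0 < n) {ε : ℝ} (hε : 0 < ε)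
    (hA : ∀ i j, ε ≤ A i j) (m : ℕ) :
    ε ^ 2 * ‖(A ^ m).map (fun a => (a : ℂ))‖ ≤ Matrix.trace (A ^ (m + 2)) := by
  have hApos : ∀ i j, 0 < A i j := fun i j => hε.trans_le (hA i j)
  have hnn := aux_pow_nonneg A hApos
  set i0 : Fin n := ⟨0, hn⟩
  have hS : ‖(A ^ m).map (fun a => (a : ℂ))‖ ≤ ∑ j, ∑ k, (A ^ m) j k :=
    aux_norm_le_sum _ (hnn m)
  have h1 : ε ^ 2 * (∑ j, ∑ k, (A ^ m) j k) ≤ (A ^ (m + 2)) i0 i0 := by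
    have e1 : A ^ (m + 2) = A * A ^ m * A := by
      rw [show m + 2 = 1 + m + 1 by ring, pow_succ, pow_add, pow_one]
    rw [e1, Matrix.mul_apply]
    have e2 : ∀ k, (A * A ^ m) i0 k * A k i0 = ∑ j, A i0 j * (A ^ m) j k * A k i0 := by
      intro k
      rw [Matrix.mul_apply, Finset.sum_mul]
    simp only [e2]
    rw [Finset.mul_sum, Finset.sum_comm]
    refine Finset.sum_le_sum fun k _ => ?_
    rw [Finset.mul_sum]
    refine Finset.sum_le_sum fun j _ => ?_
    have h3 : ε * (A ^ m) k j * ε ≤ A i0 k * (A ^ m) k j * A j i0 :=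
      mul_le_mul (mul_le_mul (hA i0 k) le_rfl (hnn m k j) (hε.le.trans (hA i0 k)))
        (hA j i0) hε.le (mul_nonneg (hε.le.trans (hA i0 k)) (hnn m k j))
    calc ε ^ 2 * (A ^ m) k j = ε * (A ^ m) k j * ε := by ring
      _ ≤ _ := h3
  have h2 : (A ^ (m + 2)) i0 i0 ≤ Matrix.trace (A ^ (m + 2)) :=
    Finset.single_le_sum (f := fun i => (A ^ (m + 2)) i i)
      (fun i _ => hnn (m + 2) i i) (Finset.mem_univ i0)
  calc ε ^ 2 * ‖(A ^ m).map (fun a => (a : ℂ))‖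
      ≤ ε ^ 2 * (∑ j, ∑ k, (A ^ m) j k) := by
        refine mul_le_mul_of_nonneg_left hS (by positivity)
    _ ≤ _ := h1.trans h2

lemma aux_specRad_eq (A : Matrix (Fin n) (Fin n) ℝ) (hn : 0 < n) :
    specRad A = (spectralRadius ℂ (A.map (fun a => (a : ℂ)))).toReal := by
  haveI : Nonempty (Fin n) := ⟨⟨0, hn⟩⟩
  set B := A.map (fun a => (a : ℂ)) with hB
  obtain ⟨μ0, hμ0, hμ0R⟩ := spectrum.exists_nnnorm_eq_spectralRadius B
  have hgreat : IsGreatest {r : ℝ | ∃ μ ∈ spectrum ℂ B, ‖μ‖ = r} (‖μ0‖) := by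
    constructor
    · exact ⟨μ0, hμ0, rfl⟩
    · rintro r ⟨μ, hμ, rfl⟩
      have hle : (‖μ‖₊ : ℝ≥0∞) ≤ spectralRadius ℂ B :=
        le_iSup₂ (f := fun k (_ : k ∈ spectrum ℂ B) => (‖k‖₊ : ℝ≥0∞)) μ hμ
      rw [← hμ0R] at hle
      have : ‖μ‖₊ ≤ ‖μ0‖₊ := by exact_mod_cast hle
      simpa only [coe_nnnorm] using NNReal.coe_le_coe.mpr this
  rw [specRad, hgreat.csSup_eq, ← hμ0R]
  simp

theorem trace_pow_rpow_tendsto_specRad {n : ℕ} (A : Matrix (Fin n) (Fin n) ℝ)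
    (hA : ∀ i j, 0 < A i j) :
    Tendsto (fun m : ℕ => (Matrix.trace (A ^ m)) ^ ((m : ℝ)⁻¹)) atTop
      (nhds (specRad A)) := by
  rcases Nat.eq_zero_or_pos n with hn | hn
  · subst hn
    have h1 : specRad A = 0 := by
      have hemp : spectrum ℂ (A.map (fun a => (a : ℂ))) = ∅ := by
        ext z
        simp [spectrum.mem_iff, isUnit_of_subsingleton]
      rw [specRad, hemp]
      simp [Real.sSup_empty]
    rw [h1]
    have : ∀ᶠ m : ℕ in atTop, (0 : ℝ) = (Matrix.trace (A ^ m)) ^ ((m : ℝ)⁻¹) := by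
      filter_upwards [eventually_ge_atTop 1] with m hm
      have ht : Matrix.trace (A ^ m) = 0 := Matrix.trace_fin_zero _
      rw [ht, Real.zero_rpow]
      positivity
    exact Tendsto.congr' this tendsto_const_nhds
  · haveI : Nonempty (Fin n) := ⟨⟨0, hn⟩⟩
    set B := A.map (fun a => (a : ℂ)) with hBdef
    obtain ⟨ε, hε, hεA⟩ := aux_exists_eps A hA
    have hBpow : ∀ m, B ^ m = (A ^ m).map (fun a => (a : ℂ)) := aux_map_pow A
    have hnn := aux_pow_nonneg A hA
    set R := spectralRadius ℂ B with hRdef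
    have hRne : R ≠ ⊤ := by
      obtain ⟨μ0, _, h⟩ := spectrum.exists_nnnorm_eq_spectralRadius B
      rw [hRdef, ← h]; exact ENNReal.coe_ne_top
    set r := R.toReal with hrdef
    -- real Gelfand
    have hg : Tendsto (fun m : ℕ => ‖B ^ m‖ ^ ((m : ℝ)⁻¹)) atTop (𝓝 r) := by
      have h := (ENNReal.tendsto_toReal hRne).comp
        (spectrum.pow_nnnorm_pow_one_div_tendsto_nhds_spectralRadius B)
      refine h.congr fun m => ?_
      simp only [Function.comp_def, one_div]
      rw [← ENNReal.toReal_rpow]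
      simp
    -- r ≥ ε > 0
    have hεpow : ∀ m : ℕ, 1 ≤ m → ∀ i j, ε ^ m ≤ (A ^ m) i j := by
      intro m hm i j
      obtain ⟨k, rfl⟩ := Nat.exists_eq_add_of_le' hm
      exact aux_pow_entry A hε hεA k i j
    have hεnorm : ∀ m : ℕ, 1 ≤ m → ε ^ m ≤ ‖B ^ m‖ := by
      intro m hm
      rw [hBpow]
      exact (hεpow m hm ⟨0, hn⟩ ⟨0, hn⟩).trans (aux_entry_le_norm _ (hnn m) _ _)
    have hrpos : 0 < r := by
      refine lt_of_lt_of_le hε (ge_of_tendsto hg ?_)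
      filter_upwards [eventually_ge_atTop 1] with m hm
      have h1 : ε = (ε ^ m) ^ ((m : ℝ)⁻¹) := by
        rw [← Real.rpow_natCast ε m, ← Real.rpow_mul hε.le,
          mul_inv_cancel₀ (by exact_mod_cast Nat.one_le_iff_ne_zero.mp hm), Real.rpow_one]
      rw [h1]
      exact Real.rpow_le_rpow (pow_nonneg hε.le m) (hεnorm m hm) (by positivity)
    -- upper bound
    have hub : ∀ᶠ m : ℕ in atTop,
        (Matrix.trace (A ^ m)) ^ ((m : ℝ)⁻¹) ≤ (n : ℝ) ^ ((m : ℝ)⁻¹) * ‖B ^ m‖ ^ ((m : ℝ)⁻¹) := by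
      filter_upwards [eventually_ge_atTop 1] with m hm
      have h1 : Matrix.trace (A ^ m) ≤ n * ‖B ^ m‖ := by
        rw [hBpow]; exact aux_trace_le _ (hnn m)
      have h2 : (0:ℝ) ≤ Matrix.trace (A ^ m) :=
        Finset.sum_nonneg fun i _ => hnn m i i
      calc (Matrix.trace (A ^ m)) ^ ((m : ℝ)⁻¹)
          ≤ ((n : ℝ) * ‖B ^ m‖) ^ ((m : ℝ)⁻¹) :=
            Real.rpow_le_rpow h2 h1 (by positivity)
        _ = _ := Real.mul_rpow (by positivity) (norm_nonneg _)
    have hubt : Tendsto (fun m : ℕ => (n : ℝ) ^ ((m : ℝ)⁻¹) * ‖B ^ m‖ ^ ((m : ℝ)⁻¹))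
        atTop (𝓝 r) := by
      have := (aux_rpow_tendsto_one (by exact_mod_cast hn : (0:ℝ) < n)).mul hg
      simpa using this
    -- lower bound
    set h : ℕ → ℝ := fun k => (ε ^ 2 * ‖B ^ k‖) ^ (((k + 2 : ℕ) : ℝ))⁻¹ with hdef
    have hht : Tendsto h atTop (𝓝 r) := by
      have hfac1 : Tendsto (fun k : ℕ => (ε ^ 2) ^ (((k + 2 : ℕ) : ℝ))⁻¹) atTop (𝓝 1) :=
        (aux_rpow_tendsto_one (by positivity)).comp (tendsto_add_atTop_nat 2)
      have hratio : Tendsto (fun k : ℕ => (k : ℝ) * (((k + 2 : ℕ) : ℝ))⁻¹) atTop (𝓝 1) := by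
        have := tendsto_natCast_div_add_atTop (2 : ℝ)
        refine this.congr fun k => ?_
        push_cast
        rw [div_eq_mul_inv]
      have hfac2 : Tendsto (fun k : ℕ => (‖B ^ k‖ ^ ((k : ℝ)⁻¹)) ^ ((k : ℝ) * (((k + 2 : ℕ) : ℝ))⁻¹))
          atTop (𝓝 r) := by
        have := hg.rpow hratio (Or.inl hrpos.ne')
        simpa using this
      have hprod := hfac1.mul hfac2
      rw [one_mul] at hprod
      refine hprod.congr' ?_
      filter_upwards [eventually_ge_atTop 1] with k hk
      have hk0 : (k : ℝ) ≠ 0 := by exact_mod_cast Nat.one_le_iff_ne_zero.mp hk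
      have e1 : (‖B ^ k‖ ^ ((k : ℝ)⁻¹)) ^ ((k : ℝ) * (((k + 2 : ℕ) : ℝ))⁻¹)
          = ‖B ^ k‖ ^ (((k + 2 : ℕ) : ℝ))⁻¹ := by
        rw [← Real.rpow_mul (norm_nonneg _)]
        congr 1
        field_simp
      rw [e1, hdef]
      exact (Real.mul_rpow (by positivity) (norm_nonneg _)).symm
    have hlt : Tendsto (fun m : ℕ => h (m - 2)) atTop (𝓝 r) :=
      hht.comp (tendsto_sub_atTop_nat 2)
    have hlb : ∀ᶠ m : ℕ in atTop,
        h (m - 2) ≤ (Matrix.trace (A ^ m)) ^ ((m : ℝ)⁻¹) := by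
      filter_upwards [eventually_ge_atTop 2] with m hm
      have hm2 : m - 2 + 2 = m := Nat.sub_add_cancel hm
      have h1 : ε ^ 2 * ‖B ^ (m - 2)‖ ≤ Matrix.trace (A ^ m) := by
        rw [hBpow, ← hm2]
        exact aux_trace_lower A hn hε hεA (m - 2)
      have e2 : h (m - 2) = (ε ^ 2 * ‖B ^ (m - 2)‖) ^ ((m : ℝ)⁻¹) := by
        simp only [hdef]
        rw [hm2]
      rw [e2]
      exact Real.rpow_le_rpow (by positivity) h1 (by positivity)
    rw [aux_specRad_eq A hn, ← hBdef, ← hRdef, ← hrdef]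
    exact tendsto_of_tendsto_of_tendsto_of_le_of_le' hlt hubt hlb hub
end

section
/- For all n×n matrices A and B with non-negative real entries and every positive integer k, Tr((A∘B)^{2k}) ≤ Tr(((A∘A)(B∘B))^k), where ∘ denotes the Hadamard product and Tr the trace. -/
open Matrix Filter

section Aux

variable {n : ℕ}

private lemma pow_mul_walk (M N : Matrix (Fin n) (Fin n) ℝ) :
    ∀ (s : ℕ) (i j : Fin n), (M ^ s * N) i j =
      ∑ f : Fin s → Fin n,
        (∏ t : Fin s, M ((Fin.cons i f : Fin (s+1) → Fin n) t.castSucc) (f t)) *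
          N ((Fin.cons i f : Fin (s+1) → Fin n) (Fin.last s)) j := by
  intro s
  induction s with
  | zero => intro i j; simp
  | succ s ih =>
    intro i j
    rw [pow_succ', Matrix.mul_assoc, Matrix.mul_apply]
    rw [← Equiv.sum_comp (Fin.consEquiv (fun _ : Fin (s+1) => Fin n))
      (fun f => (∏ t : Fin (s+1), M ((Fin.cons i f : Fin (s+2) → Fin n) t.castSucc) (f t)) *
        N ((Fin.cons i f : Fin (s+2) → Fin n) (Fin.last (s+1))) j)]
    rw [Fintype.sum_prod_type]
    refine Finset.sum_congr rfl fun l _ => ?_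
    rw [ih, Finset.mul_sum]
    refine Finset.sum_congr rfl fun f _ => ?_
    simp only [Fin.consEquiv, Equiv.coe_fn_mk]
    rw [Fin.prod_univ_succ]
    have hlast : (Fin.cons i (Fin.cons l f) : Fin (s+2) → Fin n) (Fin.last (s+1))
        = (Fin.cons l f : Fin (s+1) → Fin n) (Fin.last s) := by
      have : (Fin.last (s+1)) = (Fin.last s).succ := rfl
      rw [this, Fin.cons_succ]
    have hprod : ∀ t : Fin s,
        (Fin.cons i (Fin.cons l f) : Fin (s+2) → Fin n) t.succ.castSucc
          = (Fin.cons l f : Fin (s+1) → Fin n) t.castSucc := by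
      intro t
      rw [← Fin.succ_castSucc, Fin.cons_succ]
    simp only [Fin.castSucc_zero, Fin.cons_zero, Fin.cons_succ, hlast, hprod]
    ring
  
private lemma trace_pow_walk (M : Matrix (Fin n) (Fin n) ℝ) (s : ℕ) :
    Matrix.trace (M ^ (s+1)) = ∑ g : Fin (s+1) → Fin n, ∏ t : Fin (s+1), M (g t) (g (t+1)) := by
  rw [Matrix.trace, ← Equiv.sum_comp (Fin.consEquiv (fun _ : Fin (s+1) => Fin n))
    (fun g => ∏ t : Fin (s+1), M (g t) (g (t+1)))]
  rw [Fintype.sum_prod_type]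
  simp only [Matrix.diag_apply, Fin.consEquiv, Equiv.coe_fn_mk]
  refine Finset.sum_congr rfl fun i _ => ?_
  rw [pow_succ, pow_mul_walk]
  refine Finset.sum_congr rfl fun f _ => ?_
  rw [Fin.prod_univ_castSucc]
  congr 1
  · exact Finset.prod_congr rfl fun t _ => by
      rw [Fin.coeSucc_eq_succ, Fin.cons_succ]
  · rw [Fin.last_add_one, Fin.cons_zero]

private lemma trace_mul_pow_walk (P Q : Matrix (Fin n) (Fin n) ℝ) (s : ℕ) :
    Matrix.trace ((P * Q) ^ (s+1)) =
      ∑ gh : (Fin (s+1) → Fin n) × (Fin (s+1) → Fin n),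
        ∏ t : Fin (s+1), P (gh.1 t) (gh.2 t) * Q (gh.2 t) (gh.1 (t+1)) := by
  rw [trace_pow_walk, Fintype.sum_prod_type]
  refine Finset.sum_congr rfl fun g _ => ?_
  simp_rw [Matrix.mul_apply]
  rw [Finset.prod_univ_sum, Fintype.piFinset_univ]

private lemma trace_mul_pow_comm (P Q : Matrix (Fin n) (Fin n) ℝ) (s : ℕ) :
    Matrix.trace ((Q * P) ^ (s+1)) = Matrix.trace ((P * Q) ^ (s+1)) := by
  have h : (Q * P) ^ (s+1) = Q * ((P * Q) ^ s * P) := by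
    induction s with
    | zero => simp
    | succ s ih =>
      rw [pow_succ, ih, pow_succ]
      noncomm_ring
  rw [h, Matrix.trace_mul_comm, pow_succ, Matrix.mul_assoc]

end Aux

theorem trace_hadamard_pow_le {n : ℕ} (A B : Matrix (Fin n) (Fin n) ℝ)
    (hA : ∀ i j, 0 ≤ A i j) (hB : ∀ i j, 0 ≤ B i j) (k : ℕ) (hk : 0 < k) :
    Matrix.trace ((A.hadamard B) ^ (2 * k)) ≤
      Matrix.trace (((A.hadamard A) * (B.hadamard B)) ^ k) := by
  obtain ⟨s, rfl⟩ : ∃ s, k = s + 1 := ⟨k - 1, by omega⟩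
  have hC : (A.hadamard B) ^ (2 * (s+1)) = ((A.hadamard B) * (A.hadamard B)) ^ (s+1) := by
    rw [pow_mul, sq]
  rw [hC, trace_mul_pow_walk]
  set I := ((Fin (s+1) → Fin n) × (Fin (s+1) → Fin n))
  set x : I → ℝ := fun gh => ∏ t : Fin (s+1), A (gh.1 t) (gh.2 t) * B (gh.2 t) (gh.1 (t+1))
  set y : I → ℝ := fun gh => ∏ t : Fin (s+1), B (gh.1 t) (gh.2 t) * A (gh.2 t) (gh.1 (t+1))
  have hterm : ∀ gh : I,
      (∏ t : Fin (s+1), (A.hadamard B) (gh.1 t) (gh.2 t) *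
        (A.hadamard B) (gh.2 t) (gh.1 (t+1))) = x gh * y gh := by
    intro gh
    rw [← Finset.prod_mul_distrib]
    refine Finset.prod_congr rfl fun t _ => ?_
    simp only [Matrix.hadamard_apply]
    ring
  have hx2 : ∀ gh : I, (x gh) ^ 2 =
      ∏ t : Fin (s+1), (A.hadamard A) (gh.1 t) (gh.2 t) *
        (B.hadamard B) (gh.2 t) (gh.1 (t+1)) := by
    intro gh
    rw [← Finset.prod_pow]
    refine Finset.prod_congr rfl fun t _ => ?_
    simp only [Matrix.hadamard_apply]
    ring
  have hy2 : ∀ gh : I, (y gh) ^ 2 =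
      ∏ t : Fin (s+1), (B.hadamard B) (gh.1 t) (gh.2 t) *
        (A.hadamard A) (gh.2 t) (gh.1 (t+1)) := by
    intro gh
    rw [← Finset.prod_pow]
    refine Finset.prod_congr rfl fun t _ => ?_
    simp only [Matrix.hadamard_apply]
    ring
  simp_rw [hterm]
  have hX : Matrix.trace (((A.hadamard A) * (B.hadamard B)) ^ (s+1)) = ∑ gh : I, x gh ^ 2 := by
    rw [trace_mul_pow_walk]
    exact Finset.sum_congr rfl fun gh _ => (hx2 gh).symm
  have hY : Matrix.trace (((B.hadamard B) * (A.hadamard A)) ^ (s+1)) = ∑ gh : I, y gh ^ 2 := by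
    rw [trace_mul_pow_walk]
    exact Finset.sum_congr rfl fun gh _ => (hy2 gh).symm
  have hXY : (∑ gh : I, y gh ^ 2) = ∑ gh : I, x gh ^ 2 := by
    rw [← hX, ← hY, trace_mul_pow_comm]
  have hx0 : ∀ gh : I, 0 ≤ x gh := fun gh =>
    Finset.prod_nonneg fun t _ => mul_nonneg (hA _ _) (hB _ _)
  have hy0 : ∀ gh : I, 0 ≤ y gh := fun gh =>
    Finset.prod_nonneg fun t _ => mul_nonneg (hB _ _) (hA _ _)
  have hS : 0 ≤ ∑ gh : I, x gh * y gh :=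
    Finset.sum_nonneg fun gh _ => mul_nonneg (hx0 gh) (hy0 gh)
  have hTX : 0 ≤ ∑ gh : I, x gh ^ 2 :=
    Finset.sum_nonneg fun gh _ => sq_nonneg _
  have cs := Finset.sum_mul_sq_le_sq_mul_sq Finset.univ x y
  rw [hXY, ← sq] at cs
  rw [hX]
  exact (pow_le_pow_iff_left₀ hS hTX two_ne_zero).mp cs
end

section
/- For all n×n matrices A and B with non-negative real entries and every positive integer k, Tr(((A∘A)(B∘B))^k) ≤ Tr((AB)^{2k}), where ∘ denotes the Hadamard product and Tr the trace. -/
open Matrix Filter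

private lemma sum_sq_mul_sq_le {α : Type*} (s : Finset α) (f g : α → ℝ)
    (hf : ∀ a ∈ s, 0 ≤ f a) (hg : ∀ a ∈ s, 0 ≤ g a) :
    ∑ a ∈ s, (f a) ^ 2 * (g a) ^ 2 ≤ (∑ a ∈ s, f a * g a) ^ 2 := by
  have := Finset.sum_sq_le_sq_sum_of_nonneg (s := s) (f := fun a => f a * g a)
    (fun a ha => mul_nonneg (hf a ha) (hg a ha))
  calc ∑ a ∈ s, (f a) ^ 2 * (g a) ^ 2 = ∑ a ∈ s, (f a * g a) ^ 2 := by
        simp [mul_pow]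
    _ ≤ (∑ a ∈ s, f a * g a) ^ 2 := this

theorem trace_hadamard_sq_pow_le {n : ℕ} (A B : Matrix (Fin n) (Fin n) ℝ)
    (hA : ∀ i j, 0 ≤ A i j) (hB : ∀ i j, 0 ≤ B i j) (k : ℕ) (hk : 0 < k) :
    Matrix.trace (((A.hadamard A) * (B.hadamard B)) ^ k) ≤
      Matrix.trace ((A * B) ^ (2 * k)) := by
  set C := A * B with hCdef
  set N := (A.hadamard A) * (B.hadamard B) with hNdef
  have hC : ∀ i j, 0 ≤ C i j := by
    intro i j
    rw [hCdef, Matrix.mul_apply]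
    exact Finset.sum_nonneg fun l _ => mul_nonneg (hA i l) (hB l j)
  -- entrywise: N i j ≤ (C i j)^2 and 0 ≤ N i j
  have hN1 : ∀ i j, N i j ≤ (C i j) ^ 2 := by
    intro i j
    have := sum_sq_mul_sq_le (Finset.univ : Finset (Fin n)) (fun l => A i l)
      (fun l => B l j) (fun l _ => hA i l) (fun l _ => hB l j)
    simpa [hNdef, hCdef, Matrix.mul_apply, Matrix.hadamard, sq] using this
  have hN0 : ∀ i j, 0 ≤ N i j := by
    intro i j
    simp only [hNdef, Matrix.mul_apply, Matrix.hadamard_apply]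
    exact Finset.sum_nonneg fun l _ => mul_nonneg
      (mul_nonneg (hA i l) (hA i l)) (mul_nonneg (hB l j) (hB l j))
  -- C^m has nonneg entries
  have hCpow : ∀ m : ℕ, ∀ i j, 0 ≤ (C ^ m) i j := by
    intro m
    induction m with
    | zero => intro i j; by_cases h : i = j <;> simp [Matrix.one_apply, h]
    | succ m ih => intro i j
                   rw [pow_succ, Matrix.mul_apply]
                   exact Finset.sum_nonneg fun l _ => mul_nonneg (ih i l) (hC l j)
  -- key: (N^m) i j ≤ ((C^m) i j)^2 and nonneg
  have key : ∀ m : ℕ, ∀ i j, (N ^ m) i j ≤ ((C ^ m) i j) ^ 2 ∧ 0 ≤ (N ^ m) i j := by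
    intro m
    induction m with
    | zero =>
      intro i j
      by_cases h : i = j <;> simp [Matrix.one_apply, h]
    | succ m ih =>
      intro i j
      constructor
      · rw [pow_succ N m, pow_succ C m, Matrix.mul_apply, Matrix.mul_apply]
        calc ∑ l, (N ^ m) i l * N l j
            ≤ ∑ l, ((C ^ m) i l) ^ 2 * (C l j) ^ 2 := by
              apply Finset.sum_le_sum
              intro l _
              exact mul_le_mul (ih i l).1 (hN1 l j) (hN0 l j)
                (sq_nonneg _)
          _ ≤ (∑ l, (C ^ m) i l * C l j) ^ 2 :=
              sum_sq_mul_sq_le _ _ _ (fun l _ => hCpow m i l) (fun l _ => hC l j)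
      · rw [pow_succ, Matrix.mul_apply]
        exact Finset.sum_nonneg fun l _ => mul_nonneg (ih i l).2 (hN0 l j)
  -- conclude via trace
  have h2k : C ^ (2 * k) = C ^ k * C ^ k := by
    rw [two_mul, pow_add]
  rw [Matrix.trace, Matrix.trace, h2k]
  apply Finset.sum_le_sum
  intro i _
  calc (N ^ k) i i ≤ ((C ^ k) i i) ^ 2 := (key k i i).1
    _ = (C ^ k) i i * (C ^ k) i i := sq ((C ^ k) i i)
    _ ≤ ∑ j, (C ^ k) i j * (C ^ k) j i := by
        apply Finset.single_le_sum (f := fun j => (C ^ k) i j * (C ^ k) j i)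
          (fun j _ => mul_nonneg (hCpow k i j) (hCpow k j i)) (Finset.mem_univ i)
    _ = (C ^ k * C ^ k) i i := (Matrix.mul_apply).symm
end

section
/- For all n×n matrices A and B with non-negative real entries and every positive integer k, Tr((A∘B)^{2k}) ≤ Tr((AB)^{2k}), where ∘ denotes the Hadamard product and Tr the trace. -/
open Matrix Filter

section Aux

variable {n : ℕ}

private lemma mul_nonneg_entry (X Y : Matrix (Fin n) (Fin n) ℝ)
    (hX : ∀ i j, 0 ≤ X i j) (hY : ∀ i j, 0 ≤ Y i j) :
    ∀ i j, 0 ≤ (X * Y) i j := by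
  intro i j
  rw [Matrix.mul_apply]
  exact Finset.sum_nonneg fun l _ => mul_nonneg (hX i l) (hY l j)

private lemma pow_nonneg_entry (X : Matrix (Fin n) (Fin n) ℝ)
    (hX : ∀ i j, 0 ≤ X i j) : ∀ (k : ℕ) i j, 0 ≤ (X ^ k) i j := by
  intro k
  induction k with
  | zero =>
    intro i j
    simp only [pow_zero, Matrix.one_apply]
    split_ifs <;> norm_num
  | succ m ih =>
    rw [pow_succ]
    exact mul_nonneg_entry _ _ ih hX

private lemma mul_mono_entry (X X' Y Y' : Matrix (Fin n) (Fin n) ℝ)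
    (hX : ∀ i j, 0 ≤ X i j) (hY : ∀ i j, 0 ≤ Y i j)
    (h1 : ∀ i j, X i j ≤ X' i j) (h2 : ∀ i j, Y i j ≤ Y' i j) :
    ∀ i j, (X * Y) i j ≤ (X' * Y') i j := by
  intro i j
  rw [Matrix.mul_apply, Matrix.mul_apply]
  exact Finset.sum_le_sum fun l _ =>
    mul_le_mul (h1 i l) (h2 l j) (hY l j) ((hX i l).trans (h1 i l))

private lemma pow_mono_entry (X Y : Matrix (Fin n) (Fin n) ℝ)
    (hX : ∀ i j, 0 ≤ X i j) (h : ∀ i j, X i j ≤ Y i j) :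
    ∀ (k : ℕ) i j, (X ^ k) i j ≤ (Y ^ k) i j := by
  intro k
  induction k with
  | zero => intro i j; simp
  | succ m ih =>
    rw [pow_succ, pow_succ]
    exact mul_mono_entry _ _ _ _ (pow_nonneg_entry X hX m) hX ih h

private lemma schur_entry (P Q R S : Matrix (Fin n) (Fin n) ℝ)
    (hP : ∀ i j, 0 ≤ P i j) (hQ : ∀ i j, 0 ≤ Q i j)
    (hR : ∀ i j, 0 ≤ R i j) (hS : ∀ i j, 0 ≤ S i j) :
    ∀ i j, ((P.hadamard Q) * (R.hadamard S)) i j ≤ ((P * R).hadamard (Q * S)) i j := by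
  intro i j
  simp only [Matrix.mul_apply, Matrix.hadamard_apply]
  calc ∑ l, P i l * Q i l * (R l j * S l j)
      ≤ ∑ l, (P i l * R l j) * ∑ m, Q i m * S m j := ?_
    _ = (∑ l, P i l * R l j) * ∑ m, Q i m * S m j := (Finset.sum_mul _ _ _).symm
  refine Finset.sum_le_sum fun l _ => ?_
  have h1 : Q i l * S l j ≤ ∑ m, Q i m * S m j :=
    Finset.single_le_sum (f := fun m => Q i m * S m j)
      (fun m _ => mul_nonneg (hQ i m) (hS m j)) (Finset.mem_univ l)
  calc P i l * Q i l * (R l j * S l j) = (P i l * R l j) * (Q i l * S l j) := by ring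
    _ ≤ (P i l * R l j) * ∑ m, Q i m * S m j :=
        mul_le_mul_of_nonneg_left h1 (mul_nonneg (hP i l) (hR l j))

private lemma had_pow_entry (M N : Matrix (Fin n) (Fin n) ℝ)
    (hM : ∀ i j, 0 ≤ M i j) (hN : ∀ i j, 0 ≤ N i j) :
    ∀ (k : ℕ) i j, ((M.hadamard N) ^ k) i j ≤ ((M ^ k).hadamard (N ^ k)) i j := by
  have hadnn : ∀ i j, 0 ≤ (M.hadamard N) i j := fun i j => by
    rw [Matrix.hadamard_apply]; exact mul_nonneg (hM i j) (hN i j)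
  intro k
  induction k with
  | zero =>
    intro i j
    simp only [pow_zero, Matrix.hadamard_apply, Matrix.one_apply]
    split_ifs <;> norm_num
  | succ m ih =>
    intro i j
    rw [pow_succ, pow_succ, pow_succ]
    calc ((M.hadamard N) ^ m * M.hadamard N) i j
        ≤ (((M ^ m).hadamard (N ^ m)) * M.hadamard N) i j :=
          mul_mono_entry _ _ _ _ (pow_nonneg_entry _ hadnn m) hadnn ih
            (fun _ _ => le_rfl) i j
      _ ≤ ((M ^ m * M).hadamard (N ^ m * N)) i j :=
          schur_entry _ _ _ _ (pow_nonneg_entry M hM m) (pow_nonneg_entry N hN m) hM hN i j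

private lemma diag_sq_le_trace (P : Matrix (Fin n) (Fin n) ℝ)
    (hP : ∀ i j, 0 ≤ P i j) :
    ∑ i, (P i i) ^ 2 ≤ Matrix.trace (P * P) := by
  rw [Matrix.trace]
  refine Finset.sum_le_sum fun i _ => ?_
  rw [Matrix.diag_apply, Matrix.mul_apply]
  have := Finset.single_le_sum (f := fun j => P i j * P j i)
    (fun j _ => mul_nonneg (hP i j) (hP j i)) (Finset.mem_univ i)
  simpa [sq] using this

private lemma trace_comm_pow (A B : Matrix (Fin n) (Fin n) ℝ) (m : ℕ) :
    Matrix.trace ((A * B) ^ (m + 1)) = Matrix.trace ((B * A) ^ (m + 1)) := by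
  have hsc : SemiconjBy B (A * B) (B * A) := (mul_assoc B A B).symm
  have h : B * (A * B) ^ m = (B * A) ^ m * B := hsc.pow_right m
  calc Matrix.trace ((A * B) ^ (m + 1))
      = Matrix.trace (A * (B * (A * B) ^ m)) := by rw [pow_succ', mul_assoc]
    _ = Matrix.trace ((B * (A * B) ^ m) * A) := Matrix.trace_mul_comm _ _
    _ = Matrix.trace ((B * A) ^ (m + 1)) := by rw [h, pow_succ, mul_assoc]

end Aux

theorem trace_hadamard_pow_le_trace_mul_pow {n : ℕ} (A B : Matrix (Fin n) (Fin n) ℝ)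
    (hA : ∀ i j, 0 ≤ A i j) (hB : ∀ i j, 0 ≤ B i j) (k : ℕ) (hk : 0 < k) :
    Matrix.trace ((A.hadamard B) ^ (2 * k)) ≤ Matrix.trace ((A * B) ^ (2 * k)) := by
  set C := A.hadamard B with hC
  have hCnn : ∀ i j, 0 ≤ C i j := fun i j => by
    rw [hC, Matrix.hadamard_apply]; exact mul_nonneg (hA i j) (hB i j)
  have hABnn : ∀ i j, 0 ≤ (A * B) i j := mul_nonneg_entry A B hA hB
  have hBAnn : ∀ i j, 0 ≤ (B * A) i j := mul_nonneg_entry B A hB hA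
  -- Step 1 : C * C ≤ (A*B) ∘ (B*A) entrywise
  have step1 : ∀ i j, (C * C) i j ≤ ((A * B).hadamard (B * A)) i j := by
    intro i j
    have hcc : C * C = (A.hadamard B) * (B.hadamard A) := by
      rw [hC]
      congr 1
      ext i j
      rw [Matrix.hadamard_apply, Matrix.hadamard_apply]
      ring
    rw [hcc]
    exact schur_entry A B B A hA hB hB hA i j
  have key : ∀ i, ((C * C) ^ k) i i ≤ ((A * B) ^ k) i i * ((B * A) ^ k) i i := by
    intro i
    calc ((C * C) ^ k) i i
        ≤ (((A * B).hadamard (B * A)) ^ k) i i :=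
          pow_mono_entry _ _ (mul_nonneg_entry C C hCnn hCnn) step1 k i i
      _ ≤ (((A * B) ^ k).hadamard ((B * A) ^ k)) i i :=
          had_pow_entry _ _ hABnn hBAnn k i i
      _ = ((A * B) ^ k) i i * ((B * A) ^ k) i i := Matrix.hadamard_apply _ _ _ _
  have h1 := diag_sq_le_trace ((A * B) ^ k) (pow_nonneg_entry _ hABnn k)
  have h2 := diag_sq_le_trace ((B * A) ^ k) (pow_nonneg_entry _ hBAnn k)
  have e2 : (A * B) ^ k * (A * B) ^ k = (A * B) ^ (2 * k) := by rw [two_mul, pow_add]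
  have e3 : Matrix.trace ((B * A) ^ k * (B * A) ^ k) = Matrix.trace ((A * B) ^ (2 * k)) := by
    rw [← pow_add, ← two_mul]
    obtain ⟨m, hm⟩ : ∃ m, 2 * k = m + 1 := ⟨2 * k - 1, by omega⟩
    rw [hm, trace_comm_pow B A m]
  calc Matrix.trace (C ^ (2 * k))
      = ∑ i, ((C * C) ^ k) i i := by rw [pow_mul, pow_two, Matrix.trace]; rfl
    _ ≤ ∑ i, ((A * B) ^ k) i i * ((B * A) ^ k) i i :=
        Finset.sum_le_sum fun i _ => key i
    _ ≤ ∑ i, ((((A * B) ^ k) i i) ^ 2 + (((B * A) ^ k) i i) ^ 2) / 2 :=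
        Finset.sum_le_sum fun i _ => by
          nlinarith [sq_nonneg (((A * B) ^ k) i i - ((B * A) ^ k) i i)]
    _ = ((∑ i, (((A * B) ^ k) i i) ^ 2) + ∑ i, (((B * A) ^ k) i i) ^ 2) / 2 := by
        rw [← Finset.sum_add_distrib, Finset.sum_div]
    _ ≤ (Matrix.trace ((A * B) ^ (2 * k)) + Matrix.trace ((A * B) ^ (2 * k))) / 2 := by
        rw [e2] at h1
        rw [e3] at h2
        linarith
    _ = Matrix.trace ((A * B) ^ (2 * k)) := by ring
end

section
/- There is no lower bound on ρ(A∘B) in terms of ρ(AB) even for non-negative matrices with nonzero spectral radius: for the matrices A = [[1,x],[0,1]] and B = [[1,0],[y,1]] with x, y > 0, one has ρ(A) = ρ(B) = ρ(A∘B) = 1, while ρ(AB) ≥ 1 + xy/2, so ρ(AB) is unbounded as xy → ∞. -/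
open Matrix Filter

lemma mem_spec_iff' (M : Matrix (Fin 2) (Fin 2) ℂ) (μ : ℂ) :
    μ ∈ spectrum ℂ M ↔ (μ • (1 : Matrix (Fin 2) (Fin 2) ℂ) - M).det = 0 := by
  rw [spectrum.mem_iff, Matrix.isUnit_iff_isUnit_det, isUnit_iff_ne_zero, not_ne_iff,
    Algebra.algebraMap_eq_smul_one]

lemma specRad_of_spec_one {n : ℕ} (A : Matrix (Fin n) (Fin n) ℝ)
    (h : spectrum ℂ (A.map (fun a => (a : ℂ))) = {1}) : specRad A = 1 := by
  have : {r : ℝ | ∃ μ ∈ spectrum ℂ (A.map (fun a => (a : ℂ))), ‖μ‖ = r} = {1} := by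
    ext r; simp [h]
  rw [specRad, this, csSup_singleton]

theorem no_lower_bound_on_specRad_hadamard (x y : ℝ) (hx : 0 < x) (hy : 0 < y) :
    let A : Matrix (Fin 2) (Fin 2) ℝ := !![1, x; 0, 1]
    let B : Matrix (Fin 2) (Fin 2) ℝ := !![1, 0; y, 1]
    specRad A = 1 ∧ specRad B = 1 ∧ specRad (A.hadamard B) = 1 ∧
      1 + x * y / 2 ≤ specRad (A * B) := by
  intro A B
  have hA : specRad A = 1 := by
    apply specRad_of_spec_one
    ext μ
    rw [mem_spec_iff']
    simp [A, Matrix.det_fin_two, Matrix.map_apply, sub_eq_zero, Matrix.smul_apply]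
  have hB : specRad B = 1 := by
    apply specRad_of_spec_one
    ext μ
    rw [mem_spec_iff']
    simp [B, Matrix.det_fin_two, Matrix.map_apply, sub_eq_zero, Matrix.smul_apply]
  have hH : A.hadamard B = !![1, 0; 0, 1] := by
    ext i j
    fin_cases i <;> fin_cases j <;> simp [A, B, Matrix.hadamard]
  have hHad : specRad (A.hadamard B) = 1 := by
    rw [hH]
    apply specRad_of_spec_one
    ext μ
    rw [mem_spec_iff']
    simp [Matrix.det_fin_two, Matrix.map_apply, sub_eq_zero, Matrix.smul_apply]
  refine ⟨hA, hB, hHad, ?_⟩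
  -- A * B = !![1 + x*y, x; y, 1]
  have hAB : A * B = !![1 + x * y, x; y, 1] := by
    ext i j
    fin_cases i <;> fin_cases j <;>
      simp [A, B, Matrix.mul_apply, Fin.sum_univ_two] <;> ring
  set s : ℝ := Real.sqrt (x * y * (x * y + 4)) with hs_def
  have hs_nonneg : 0 ≤ s := Real.sqrt_nonneg _
  have hs_sq : s ^ 2 = x * y * (x * y + 4) := by
    rw [hs_def, Real.sq_sqrt]
    positivity
  set r : ℝ := (2 + x * y + s) / 2 with hr_def
  have hr_pos : 0 < r := by positivity
  have hmem : (r : ℂ) ∈ spectrum ℂ ((A * B).map (fun a => (a : ℂ))) := by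
    rw [mem_spec_iff', hAB]
    have hreal : (r - (1 + x * y)) * (r - 1) - x * y = 0 := by
      rw [hr_def]
      nlinarith [hs_sq]
    simp [Matrix.det_fin_two, Matrix.map_apply, Matrix.smul_apply]
    have := congrArg (fun t : ℝ => (t : ℂ)) hreal
    push_cast at this ⊢
    linear_combination this
  have hbdd : BddAbove {t : ℝ | ∃ μ ∈ spectrum ℂ ((A * B).map (fun a => (a : ℂ))),
      ‖μ‖ = t} := by
    have hfin : {t : ℝ | ∃ μ ∈ spectrum ℂ ((A * B).map (fun a => (a : ℂ))),
        ‖μ‖ = t}.Finite := by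
      have h := (Matrix.finite_spectrum ((A * B).map (fun a => (a : ℂ)))).image (fun μ : ℂ => ‖μ‖)
      exact h
    exact hfin.bddAbove
  have hle : r ≤ specRad (A * B) := by
    apply le_csSup hbdd
    exact ⟨(r : ℂ), hmem, by rw [Complex.norm_real, Real.norm_eq_abs, abs_of_pos hr_pos]⟩
  calc 1 + x * y / 2 ≤ r := by rw [hr_def]; linarith
    _ ≤ specRad (A * B) := hle
end
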